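/- arXiv:1803.05380 — 9 statements merged into one kernel-verified Lean document; each statement's English description precedes it below -/
import Mathlib

section
/- Suppose the spanning tree polynomial is written as P_n = Σ_{i=1}^t g_i · h_i, where each g_i and each h_i is a nonzero polynomial with nonnegative real coefficients. Then for every i the following holds: every monomial occurring (with nonzero coefficient) in g_i or in h_i is multilinear, i.e. of the form Π_{e∈A} x_e for a set A of edges; and for every monomial Π_{e∈A} x_e of g_i and every monomial Π_{e∈B} x_e of h_i, the edge sets A and B are disjoint and A ∪ B is a spanning tree of K_n. In particular, the families of supports of the monomials of g_i and of h_i form a rectangle. -/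
open Finset

/-- An edge set of `K_n` is valid if it contains no loops. -/
def ValidEdges {n : ℕ} (E : Finset (Sym2 (Fin n))) : Prop := ∀ e ∈ E, ¬ e.IsDiag

/-- `E` is (the edge set of) a spanning tree of `K_n`. -/
def IsSpanningTree {n : ℕ} (E : Finset (Sym2 (Fin n))) : Prop :=
  ValidEdges E ∧ (SimpleGraph.fromEdgeSet (E : Set (Sym2 (Fin n)))).IsTree

/-- `E` is (the edge set of) a forest in `K_n`. -/
def IsForest {n : ℕ} (E : Finset (Sym2 (Fin n))) : Prop :=
  ValidEdges E ∧ (SimpleGraph.fromEdgeSet (E : Set (Sym2 (Fin n)))).IsAcyclic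

/-- The pair of families `𝒜, ℬ` of forests forms a rectangle: the members of each pair
are edge-disjoint and their union is a spanning tree of `K_n`. -/
def IsRectangle {n : ℕ} (𝒜 ℬ : Set (Finset (Sym2 (Fin n)))) : Prop :=
  (∀ A ∈ 𝒜, IsForest A) ∧ (∀ B ∈ ℬ, IsForest B) ∧
  ∀ A ∈ 𝒜, ∀ B ∈ ℬ, Disjoint A B ∧ IsSpanningTree (A ∪ B)

/-- The family `ℛ = 𝒜 ∨ ℬ = {A ∪ B : A ∈ 𝒜, B ∈ ℬ}` of spanning trees of a rectangle. -/
def rectFamily {n : ℕ} (𝒜 ℬ : Set (Finset (Sym2 (Fin n)))) : Set (Finset (Sym2 (Fin n))) :=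
  {T | ∃ A ∈ 𝒜, ∃ B ∈ ℬ, T = A ∪ B}

/-- A rectangle is balanced if `(n-1)/3 ≤ |A|, |B| ≤ 2(n-1)/3` for all `A ∈ 𝒜`, `B ∈ ℬ`. -/
def IsBalanced {n : ℕ} (𝒜 ℬ : Set (Finset (Sym2 (Fin n)))) : Prop :=
  (∀ A ∈ 𝒜, ((n : ℝ) - 1) / 3 ≤ A.card ∧ (A.card : ℝ) ≤ 2 * ((n : ℝ) - 1) / 3) ∧
  (∀ B ∈ ℬ, ((n : ℝ) - 1) / 3 ≤ B.card ∧ (B.card : ℝ) ≤ 2 * ((n : ℝ) - 1) / 3)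

open scoped Classical in
/-- The spanning tree polynomial `P_n(x) = Σ_T Π_{e ∈ T} x_e`, the sum over all spanning
trees `T` of `K_n`, with variables indexed by the edges of `K_n`. -/
noncomputable def spanningTreePoly (n : ℕ) : MvPolynomial (Sym2 (Fin n)) ℝ :=
  ∑ T ∈ Finset.univ.filter (fun T : Finset (Sym2 (Fin n)) => IsSpanningTree T),
    ∏ e ∈ T, MvPolynomial.X e


open MvPolynomial in
private lemma myAcyclicMono {V : Type*} {G H : SimpleGraph V} (hle : H ≤ G)
    (hG : G.IsAcyclic) : H.IsAcyclic := fun _ c hc => hG (c.mapLe hle) (hc.mapLe hle)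

open MvPolynomial in
private lemma myProdXEq {σ : Type*} [DecidableEq σ] (T : Finset σ) :
    ∏ e ∈ T, (X e : MvPolynomial σ ℝ) =
      monomial (∑ e ∈ T, Finsupp.single e 1) 1 := by
  induction T using Finset.induction with
  | empty => simp
  | insert _ _ h ih =>
    rw [Finset.prod_insert h, Finset.sum_insert h, ih, X, monomial_mul, one_mul]

private lemma myIndApply {σ : Type*} [DecidableEq σ] (T : Finset σ) (e : σ) :
    (∑ x ∈ T, Finsupp.single x (1:ℕ)) e = if e ∈ T then 1 else 0 := by
  rw [Finsupp.finset_sum_apply]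
  simp [Finsupp.single_apply, Finset.sum_ite_eq' T e (fun _ => 1)]

open MvPolynomial in
private lemma myCoeffNeZero {n : ℕ} {m : Sym2 (Fin n) →₀ ℕ}
    (hm : (spanningTreePoly n).coeff m ≠ 0) :
    ∃ T : Finset (Sym2 (Fin n)), IsSpanningTree T ∧ m = ∑ e ∈ T, Finsupp.single e 1 := by
  classical
  rw [spanningTreePoly, coeff_sum] at hm
  obtain ⟨T, hT, hne⟩ := Finset.exists_ne_zero_of_sum_ne_zero hm
  rw [myProdXEq, coeff_monomial] at hne
  refine ⟨T, (Finset.mem_filter.mp hT).2, ?_⟩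
  by_contra h
  exact hne (if_neg (fun hh => h hh.symm))

/-- If `P_n = Σ_{i=1}^t g_i · h_i` with all `g_i, h_i` nonzero polynomials with
nonnegative coefficients, then for every `i`: every monomial of `g_i` and of `h_i` is
multilinear, and for all monomials `Π_{e∈A} x_e` of `g_i` and `Π_{e∈B} x_e` of `h_i` the sets
`A`, `B` are disjoint and `A ∪ B` is a spanning tree of `K_n`; in particular the families of
supports of the monomials of `g_i` and of `h_i` form a rectangle. -/
theorem spanningTreePoly_decomposition_rectangles (n t : ℕ)
    (g h : Fin t → MvPolynomial (Sym2 (Fin n)) ℝ)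
    (hg0 : ∀ i, g i ≠ 0) (hh0 : ∀ i, h i ≠ 0)
    (hgpos : ∀ i mono, 0 ≤ (g i).coeff mono) (hhpos : ∀ i mono, 0 ≤ (h i).coeff mono)
    (heq : spanningTreePoly n = ∑ i, g i * h i) :
    ∀ i : Fin t,
      (∀ ma ∈ (g i).support, ∀ e, ma e ≤ 1) ∧
      (∀ mb ∈ (h i).support, ∀ e, mb e ≤ 1) ∧
      (∀ ma ∈ (g i).support, ∀ mb ∈ (h i).support,
        Disjoint ma.support mb.support ∧ IsSpanningTree (ma.support ∪ mb.support)) ∧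
      IsRectangle (((g i).support.image Finsupp.support : Finset _) : Set (Finset (Sym2 (Fin n))))
        (((h i).support.image Finsupp.support : Finset _) : Set (Finset (Sym2 (Fin n)))) := by
  classical
  intro i
  obtain ⟨a0, ha0⟩ := Finset.nonempty_iff_ne_empty.mpr
    (fun he => hg0 i (MvPolynomial.support_eq_empty.mp he))
  obtain ⟨b0, hb0⟩ := Finset.nonempty_iff_ne_empty.mpr
    (fun he => hh0 i (MvPolynomial.support_eq_empty.mp he))
  have key : ∀ a ∈ (g i).support, ∀ b ∈ (h i).support,
      ∃ T : Finset (Sym2 (Fin n)), IsSpanningTree T ∧ a + b = ∑ e ∈ T, Finsupp.single e 1 := by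
    intro a ha b hb
    have hga : 0 < (g i).coeff a :=
      lt_of_le_of_ne (hgpos i a) (Ne.symm (MvPolynomial.mem_support_iff.mp ha))
    have hhb : 0 < (h i).coeff b :=
      lt_of_le_of_ne (hhpos i b) (Ne.symm (MvPolynomial.mem_support_iff.mp hb))
    have h1 : 0 < (g i * h i).coeff (a + b) := by
      rw [MvPolynomial.coeff_mul]
      refine lt_of_lt_of_le (mul_pos hga hhb) ?_
      refine Finset.single_le_sum
        (f := fun p : (Sym2 (Fin n) →₀ ℕ) × (Sym2 (Fin n) →₀ ℕ) =>
          (g i).coeff p.1 * (h i).coeff p.2) (a := (a, b))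
        (fun p _ => mul_nonneg (hgpos i _) (hhpos i _)) ?_
      rw [Finset.HasAntidiagonal.mem_antidiagonal]
    have h2 : (spanningTreePoly n).coeff (a + b) ≠ 0 := by
      rw [heq, MvPolynomial.coeff_sum]
      have : 0 < ∑ j, (g j * h j).coeff (a + b) := by
        refine lt_of_lt_of_le h1 (Finset.single_le_sum
          (f := fun j => (g j * h j).coeff (a + b)) (fun j _ => ?_) (Finset.mem_univ i))
        rw [MvPolynomial.coeff_mul]
        exact Finset.sum_nonneg fun p _ => mul_nonneg (hgpos j _) (hhpos j _)
      exact this.ne'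
    exact myCoeffNeZero h2
  have main : ∀ a ∈ (g i).support, ∀ b ∈ (h i).support,
      (∀ e, a e ≤ 1) ∧ (∀ e, b e ≤ 1) ∧ Disjoint a.support b.support ∧
        IsSpanningTree (a.support ∪ b.support) := by
    intro a ha b hb
    obtain ⟨T, hT, hab⟩ := key a ha b hb
    have happ : ∀ e, a e + b e = if e ∈ T then 1 else 0 := fun e => by
      rw [← Finsupp.add_apply, hab, myIndApply]
    have hle : ∀ e, a e + b e ≤ 1 := fun e => by rw [happ]; split <;> omega
    have hsupp : a.support ∪ b.support = T := by
      ext e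
      have := happ e
      simp only [Finset.mem_union, Finsupp.mem_support_iff]
      by_cases hT' : e ∈ T <;> simp [hT'] at this ⊢ <;> omega
    have hdisj : Disjoint a.support b.support := by
      rw [Finset.disjoint_left]
      intro e hea heb
      simp only [Finsupp.mem_support_iff] at hea heb
      have := hle e; omega
    exact ⟨fun e => le_trans (Nat.le_add_right _ _) (hle e),
      fun e => le_trans (Nat.le_add_left _ _) (hle e), hdisj, hsupp ▸ hT⟩
  have forestOf : ∀ E E' : Finset (Sym2 (Fin n)), IsSpanningTree (E ∪ E') → IsForest E := by
    intro E E' hst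
    refine ⟨fun e he => hst.1 e (Finset.mem_union_left _ he), ?_⟩
    refine myAcyclicMono (SimpleGraph.fromEdgeSet_mono ?_) hst.2.IsAcyclic
    exact_mod_cast Finset.coe_subset.mpr Finset.subset_union_left
  refine ⟨fun ma hma e => (main ma hma b0 hb0).1 e,
    fun mb hmb e => (main a0 ha0 mb hmb).2.1 e,
    fun ma hma mb hmb => ⟨(main ma hma mb hmb).2.2.1, (main ma hma mb hmb).2.2.2⟩,
    ?_, ?_, ?_⟩
  · intro A hA
    simp only [Finset.coe_image, Set.mem_image, Finset.mem_coe] at hA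
    obtain ⟨a, ha, rfl⟩ := hA
    exact forestOf _ _ (main a ha b0 hb0).2.2.2
  · intro B hB
    simp only [Finset.coe_image, Set.mem_image, Finset.mem_coe] at hB
    obtain ⟨b, hb, rfl⟩ := hB
    have hst := (main a0 ha0 b hb).2.2.2
    rw [Finset.union_comm] at hst
    exact forestOf _ _ hst
  · intro A hA B hB
    simp only [Finset.coe_image, Set.mem_image, Finset.mem_coe] at hA hB
    obtain ⟨a, ha, rfl⟩ := hA
    obtain ⟨b, hb, rfl⟩ := hB
    exact ⟨(main a ha b hb).2.2.1, (main a ha b hb).2.2.2⟩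
end

section
/- Let ℛ = 𝒜 ∨ ℬ be a rectangle in K_n, and suppose T_0 = A_0 ∪ B_0 with A_0 ∈ 𝒜 and B_0 ∈ ℬ is a spanning star-tree with star centers c_1, …, c_m. For each non-center vertex v let e_v denote the unique edge of T_0 joining v to a center, and set U = {v : e_v ∈ A_0} and V = {v : e_v ∈ B_0}. Then for every A ∈ 𝒜, every B ∈ ℬ, every u ∈ U and every v ∈ V: the number of edges of A joining u to a vertex of V is at most m, and the number of edges of B joining a vertex of U to v is at most m. -/
open Finset

/-- `S` is a `d`-star with center `z`: the edge set joining `z` to each of `d` leaves. -/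
def IsStar {n : ℕ} (d : ℕ) (S : Finset (Sym2 (Fin n))) (z : Fin n) : Prop :=
  ∃ L : Finset (Fin n), z ∉ L ∧ L.card = d ∧ S = L.image (fun v => s(z, v))

/-- `F` is a star factor of `K_n` with center set `C` and leaf sets `L`: a spanning forest
consisting of `m` vertex-disjoint `d`-stars. -/
def IsStarFactorOn {n : ℕ} (m d : ℕ) (F : Finset (Sym2 (Fin n))) (C : Finset (Fin n))
    (L : Fin n → Finset (Fin n)) : Prop :=
  C.card = m ∧ (∀ z ∈ C, z ∉ L z ∧ (L z).card = d) ∧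
  (∀ z ∈ C, ∀ z' ∈ C, z ≠ z' → Disjoint (insert z (L z)) (insert z' (L z'))) ∧
  C.biUnion (fun z => insert z (L z)) = Finset.univ ∧
  F = C.biUnion (fun z => (L z).image (fun v => s(z, v)))

/-- `F` is a star factor of `K_n`: a spanning forest consisting of `m` vertex-disjoint
`d`-stars. -/
def IsStarFactor {n : ℕ} (m d : ℕ) (F : Finset (Sym2 (Fin n))) : Prop :=
  ∃ C L, IsStarFactorOn m d F C L

/-- `z` is a center of a `d`-star contained in `F`. -/
def IsCenterOf {n : ℕ} (d : ℕ) (F : Finset (Sym2 (Fin n))) (z : Fin n) : Prop :=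
  ∃ S, S ⊆ F ∧ IsStar d S z

/-- `P` is the edge set of a path whose vertex set is exactly `C`. -/
def IsPathOn {n : ℕ} (C : Finset (Fin n)) (P : Finset (Sym2 (Fin n))) : Prop :=
  ∃ l : List (Fin n), l.Nodup ∧ l.toFinset = C ∧
    P = ((l.zip l.tail).map (fun p => s(p.1, p.2))).toFinset

/-- `T` is a spanning star-tree: a spanning tree consisting of `m` vertex-disjoint `d`-stars
whose centers are joined into a path. -/
def IsSpanningStarTree {n : ℕ} (m d : ℕ) (T : Finset (Sym2 (Fin n))) : Prop :=
  IsSpanningTree T ∧ ∃ F P C L, IsStarFactorOn m d F C L ∧ IsPathOn C P ∧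
    Disjoint F P ∧ T = F ∪ P

open Classical in
lemma acyclic_crossing_bound {n : ℕ} (G : SimpleGraph (Fin n)) (hG : G.IsAcyclic)
    (C S : Finset (Fin n)) (u : Fin n) (hu : u ∉ C)
    (hS : ∀ v ∈ S, v ∉ C ∧ G.Adj u v ∧ ∃ c ∈ C, G.Adj v c) : S.card ≤ C.card := by
  have hpu := SimpleGraph.isAcyclic_iff_path_unique.mp hG
  apply Finset.card_le_card_of_injOn
    (fun v => if h : ∃ c ∈ C, G.Adj v c then h.choose else u)
  · intro v hv
    rcases hS v hv with ⟨-, -, h⟩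
    simp only [dif_pos h]
    exact h.choose_spec.1
  · intro v₁ hv₁ v₂ hv₂ heq
    simp only [Finset.mem_coe] at hv₁ hv₂
    rcases hS v₁ hv₁ with ⟨hvC₁, hadjU₁, h₁⟩
    rcases hS v₂ hv₂ with ⟨hvC₂, hadjU₂, h₂⟩
    simp only [dif_pos h₁, dif_pos h₂] at heq
    set c := h₁.choose with hc
    have hcC : c ∈ C := h₁.choose_spec.1
    have hadj₁ : G.Adj v₁ c := h₁.choose_spec.2
    have hadj₂ : G.Adj v₂ c := by rw [heq]; exact h₂.choose_spec.2
    by_contra hne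
    have huc : u ≠ c := fun h => hu (h ▸ hcC)
    have h1c : v₁ ≠ c := fun h => hvC₁ (h ▸ hcC)
    have h2c : v₂ ≠ c := fun h => hvC₂ (h ▸ hcC)
    have hp : (SimpleGraph.Walk.cons hadjU₁ (SimpleGraph.Walk.cons hadj₁
        SimpleGraph.Walk.nil)).IsPath := by
      simp [SimpleGraph.Walk.isPath_def, hadjU₁.ne, huc, h1c]
    have hq : (SimpleGraph.Walk.cons hadjU₂ (SimpleGraph.Walk.cons hadj₂
        SimpleGraph.Walk.nil)).IsPath := by
      simp [SimpleGraph.Walk.isPath_def, hadjU₂.ne, huc, h2c]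
    have hpath : (⟨_, hp⟩ : G.Path u c) = ⟨_, hq⟩ := hpu _ _
    have hsup := congrArg (fun w : G.Path u c => w.val.support) hpath
    simp at hsup
    exact hne hsup

/-- **Claim 1.** Let `ℛ = 𝒜 ∨ ℬ` be a rectangle in `K_n` and let
`T₀ = A₀ ∪ B₀` (`A₀ ∈ 𝒜`, `B₀ ∈ ℬ`) be a spanning star-tree with star centers `C`.
With `U` (resp. `V`) the set of non-centers joined in `T₀` to a center by an edge
of `A₀` (resp. `B₀`): no forest `A ∈ 𝒜` has more than `m` edges joining a fixed `u ∈ U`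
to `V`, and no forest `B ∈ ℬ` has more than `m` edges joining `U` to a fixed `v ∈ V`. -/
theorem rectangle_crossing_degree_bound (n m d : ℕ) (hm : 0 < m) (hd : 0 < d)
    (hn : (d + 1) * m = n)
    (𝒜 ℬ : Set (Finset (Sym2 (Fin n)))) (hrect : IsRectangle 𝒜 ℬ)
    (A0 B0 : Finset (Sym2 (Fin n))) (hA0 : A0 ∈ 𝒜) (hB0 : B0 ∈ ℬ)
    (F0 P : Finset (Sym2 (Fin n))) (C : Finset (Fin n)) (L : Fin n → Finset (Fin n))
    (hF0 : IsStarFactorOn m d F0 C L) (hP : IsPathOn C P) (hFP : Disjoint F0 P)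
    (hT0 : A0 ∪ B0 = F0 ∪ P)
    (U V : Finset (Fin n))
    (hU : U = (Finset.univ \ C).filter (fun v => ∃ c ∈ C, s(v, c) ∈ A0))
    (hV : V = (Finset.univ \ C).filter (fun v => ∃ c ∈ C, s(v, c) ∈ B0)) :
    (∀ A ∈ 𝒜, ∀ u ∈ U, (V.filter (fun v => s(u, v) ∈ A)).card ≤ m) ∧
    (∀ B ∈ ℬ, ∀ v ∈ V, (U.filter (fun u => s(u, v) ∈ B)).card ≤ m) := by
  obtain ⟨hA, hB, hAB⟩ := hrect
  have hCm : C.card = m := hF0.1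
  constructor
  · intro A hAmem u hu
    obtain ⟨hdisj, hvalid, htree⟩ :
        Disjoint A B0 ∧ ValidEdges (A ∪ B0) ∧
          (SimpleGraph.fromEdgeSet ((A ∪ B0 : Finset (Sym2 (Fin n))) : Set (Sym2 (Fin n)))).IsTree := by
      obtain ⟨h1, h2, h3⟩ := hAB A hAmem B0 hB0
      exact ⟨h1, h2, h3⟩
    rw [hU] at hu
    simp only [Finset.mem_filter, Finset.mem_sdiff, Finset.mem_univ, true_and] at hu
    rw [← hCm]
    apply acyclic_crossing_bound _ htree.IsAcyclic C _ u hu.1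
    intro v hv
    simp only [Finset.mem_filter, hV, Finset.mem_sdiff, Finset.mem_univ, true_and] at hv
    obtain ⟨⟨hvC, c, hcC, hvc⟩, hAuv⟩ := hv
    have hune : u ≠ v := by
      intro h
      exact (hA A hAmem).1 _ hAuv (by simp [h])
    refine ⟨hvC, ?_, c, hcC, ?_⟩
    · rw [SimpleGraph.fromEdgeSet_adj]
      exact ⟨Finset.mem_coe.mpr (Finset.mem_union_left _ hAuv), hune⟩
    · rw [SimpleGraph.fromEdgeSet_adj]
      exact ⟨Finset.mem_coe.mpr (Finset.mem_union_right _ hvc), fun h => hvC (h ▸ hcC)⟩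
  · intro B hBmem v hv
    obtain ⟨hdisj, hvalid, htree⟩ :
        Disjoint A0 B ∧ ValidEdges (A0 ∪ B) ∧
          (SimpleGraph.fromEdgeSet ((A0 ∪ B : Finset (Sym2 (Fin n))) : Set (Sym2 (Fin n)))).IsTree := by
      obtain ⟨h1, h2, h3⟩ := hAB A0 hA0 B hBmem
      exact ⟨h1, h2, h3⟩
    rw [hV] at hv
    simp only [Finset.mem_filter, Finset.mem_sdiff, Finset.mem_univ, true_and] at hv
    rw [← hCm]
    apply acyclic_crossing_bound _ htree.IsAcyclic C _ v hv.1
    intro u hu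
    simp only [Finset.mem_filter, hU, Finset.mem_sdiff, Finset.mem_univ, true_and] at hu
    obtain ⟨⟨huC, c, hcC, huc⟩, hBuv⟩ := hu
    have hvne : v ≠ u := by
      intro h
      exact (hB B hBmem).1 _ hBuv (by simp [h])
    refine ⟨huC, ?_, c, hcC, ?_⟩
    · rw [SimpleGraph.fromEdgeSet_adj]
      exact ⟨Finset.mem_coe.mpr (Finset.mem_union_right _ (Sym2.eq_swap ▸ hBuv)), hvne⟩
    · rw [SimpleGraph.fromEdgeSet_adj]
      exact ⟨Finset.mem_coe.mpr (Finset.mem_union_left _ huc), fun h => huC (h ▸ hcC)⟩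
end

section
/- Let ℛ = 𝒜 ∨ ℬ be a rectangle in K_n containing a spanning star-tree T_0 = A_0 ∪ B_0 (A_0 ∈ 𝒜, B_0 ∈ ℬ) with star centers c_1, …, c_m; for each non-center vertex v let e_v denote the unique edge of T_0 joining v to a center, and set U = {v : e_v ∈ A_0} and V = {v : e_v ∈ B_0}. For a vertex z ∈ U let V_z = {v ∈ V : the edge {z, v} belongs to some forest A ∈ 𝒜}. Then for every star factor F ∈ ℱ_ℛ and every star center z of F with z ∈ U, the number of edges of F joining z to a vertex of V_z is at most m. -/
open Finset

lemma not_isAcyclic_of_four_cycle {α : Type*} {G : SimpleGraph α} {a b c d : α}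
    (h1 : G.Adj a b) (h2 : G.Adj b c) (h3 : G.Adj c d) (h4 : G.Adj d a)
    (hac : a ≠ c) (hbd : b ≠ d) : ¬ G.IsAcyclic := by
  intro hG
  have hab := h1.ne
  have hbc := h2.ne
  have hcd := h3.ne
  have hda := h4.ne
  let w : G.Walk a a := .cons h1 (.cons h2 (.cons h3 (.cons h4 .nil)))
  apply hG w
  constructor
  · constructor
    · rw [SimpleGraph.Walk.isTrail_def]
      simp only [w, SimpleGraph.Walk.edges_cons, SimpleGraph.Walk.edges_nil,
        List.nodup_cons, List.mem_cons, List.not_mem_nil, List.nodup_nil,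
        Sym2.eq, Sym2.rel_iff', Prod.mk.injEq, Prod.swap_prod_mk]
      push_neg
      refine ⟨⟨?_, ?_, ?_⟩, ⟨?_, ?_⟩, ?_, ?_⟩ <;> aesop
    · simp [w]
  · simp only [w, SimpleGraph.Walk.support_cons, SimpleGraph.Walk.support_nil,
      List.tail_cons, List.nodup_cons, List.mem_cons, List.not_mem_nil,
      List.nodup_nil]
    refine ⟨?_, ?_, ?_, ?_⟩ <;> aesop

open scoped Classical in
/-- **Claim 2.** Let `ℛ = 𝒜 ∨ ℬ` be a rectangle in `K_n` containing a spanning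
star-tree `T₀ = A₀ ∪ B₀` (`A₀ ∈ 𝒜`, `B₀ ∈ ℬ`) with star centers `C`; let `U`, `V` be the sets
of non-centers joined in `T₀` to a center by an edge of `A₀` resp. `B₀`. For `z ∈ U` let
`V_z = {v ∈ V : s(z,v) belongs to some A ∈ 𝒜}`. Then for every star factor `F` covered by
`ℛ` and every star center `z` of `F` with `z ∈ U`, the number of edges of `F` joining `z`
to a vertex of `V_z` is at most `m`. -/
theorem covered_star_factor_center_bound (n m d : ℕ) (hm : 0 < m) (hd : 0 < d)
    (hn : (d + 1) * m = n)
    (𝒜 ℬ : Set (Finset (Sym2 (Fin n)))) (hrect : IsRectangle 𝒜 ℬ)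
    (A0 B0 : Finset (Sym2 (Fin n))) (hA0 : A0 ∈ 𝒜) (hB0 : B0 ∈ ℬ)
    (F0 P : Finset (Sym2 (Fin n))) (C : Finset (Fin n)) (L : Fin n → Finset (Fin n))
    (hF0 : IsStarFactorOn m d F0 C L) (hP : IsPathOn C P) (hFP : Disjoint F0 P)
    (hT0 : A0 ∪ B0 = F0 ∪ P)
    (U V : Finset (Fin n))
    (hU : U = (Finset.univ \ C).filter (fun v => ∃ c ∈ C, s(v, c) ∈ A0))
    (hV : V = (Finset.univ \ C).filter (fun v => ∃ c ∈ C, s(v, c) ∈ B0))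
    (F : Finset (Sym2 (Fin n))) (hF : IsStarFactor m d F)
    (hcov : ∃ T ∈ rectFamily 𝒜 ℬ, F ⊆ T)
    (z : Fin n) (hzU : z ∈ U) (hz : IsCenterOf d F z) :
    ((V.filter (fun v => (∃ A ∈ 𝒜, s(z, v) ∈ A))).filter
        (fun v => s(z, v) ∈ F)).card ≤ m := by
  classical
  obtain ⟨T, ⟨A, hA, B, hB, rfl⟩, hFT⟩ := hcov
  obtain ⟨hAfor, hBfor, hAB⟩ := hrect
  set S := ((V.filter (fun v => (∃ A ∈ 𝒜, s(z, v) ∈ A))).filter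
      (fun v => s(z, v) ∈ F)) with hSdef
  have hSV : ∀ v ∈ S, v ∈ V := by
    intro v hv
    simp only [hSdef, Finset.mem_filter] at hv
    exact hv.1.1
  -- z is not a center
  have hzC : z ∉ C := by
    rw [hU, Finset.mem_filter, Finset.mem_sdiff] at hzU
    exact hzU.1.2
  -- vertices of V are not centers
  have hVC : ∀ v ∈ V, v ∉ C := by
    intro v hv
    rw [hV, Finset.mem_filter, Finset.mem_sdiff] at hv
    exact hv.1.2
  -- counted edges lie in A
  have hedgeA : ∀ v ∈ S, s(z, v) ∈ A := by
    intro v hv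
    simp only [hSdef, Finset.mem_filter] at hv
    obtain ⟨⟨_, A', hA', hmem⟩, hvF⟩ := hv
    have : s(z, v) ∈ A ∪ B := hFT hvF
    rcases Finset.mem_union.1 this with h | h
    · exact h
    · exact absurd h (Finset.disjoint_left.1 (hAB A' hA' B hB).1 hmem)
  -- z ≠ v for counted v
  have hzv : ∀ v ∈ S, z ≠ v := by
    intro v hv heq
    have h1 := hedgeA v hv
    have hval : ValidEdges (A ∪ B0) := (hAB A hA B0 hB0).2.1
    exact hval s(z, v) (Finset.mem_union_left _ h1) (by rw [heq]; exact Sym2.mk_isDiag_iff.mpr rfl)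
  -- choice of a center attached to each v ∈ V via B0
  have hchoice : ∀ v ∈ V, ∃ c ∈ C, s(v, c) ∈ B0 := by
    intro v hv
    rw [hV, Finset.mem_filter] at hv
    exact hv.2
  set f : Fin n → Fin n := fun v =>
    if h : ∃ c ∈ C, s(v, c) ∈ B0 then h.choose else v with hfdef
  have hf : ∀ v ∈ V, f v ∈ C ∧ s(v, f v) ∈ B0 := by
    intro v hv
    have h := hchoice v hv
    simp only [hfdef, dif_pos h]
    exact ⟨h.choose_spec.1, h.choose_spec.2⟩
  -- the tree A ∪ B0
  have htree := (hAB A hA B0 hB0).2.2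
  have hacyc := htree.IsAcyclic
  set G := SimpleGraph.fromEdgeSet ((A ∪ B0 : Finset (Sym2 (Fin n))) : Set (Sym2 (Fin n))) with hGdef
  have hadj : ∀ a b : Fin n, a ≠ b → s(a, b) ∈ A ∪ B0 → G.Adj a b := by
    intro a b hne hmem
    rw [hGdef, SimpleGraph.fromEdgeSet_adj]
    exact ⟨by exact_mod_cast hmem, hne⟩
  -- injectivity of f on S
  have hinj : Set.InjOn f S := by
    intro v hv v' hv' heq
    by_contra hne
    have hvV := hSV v hv
    have hv'V := hSV v' hv'
    obtain ⟨hcC, hvc⟩ := hf v hvV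
    obtain ⟨hcC', hv'c⟩ := hf v' hv'V
    rw [heq] at hvc hcC
    set c := f v' with hcdef
    have hzv1 : z ≠ v := hzv v hv
    have hzv2 : z ≠ v' := hzv v' hv'
    have hvc1 : v ≠ c := fun h => hVC v hvV (h ▸ hcC)
    have hvc2 : v' ≠ c := fun h => hVC v' hv'V (h ▸ hcC)
    have hzc : z ≠ c := fun h => hzC (h ▸ hcC)
    have h1 : G.Adj z v := hadj z v hzv1 (Finset.mem_union_left _ (hedgeA v hv))
    have h2 : G.Adj v c := hadj v c hvc1 (Finset.mem_union_right _ hvc)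
    have h3 : G.Adj c v' := (hadj v' c hvc2 (Finset.mem_union_right _ hv'c)).symm
    have h4 : G.Adj v' z := (hadj z v' hzv2 (Finset.mem_union_left _ (hedgeA v' hv'))).symm
    exact not_isAcyclic_of_four_cycle h1 h2 h3 h4 hzc hne hacyc
  have hmaps : ∀ v ∈ S, f v ∈ C := fun v hv => (hf v (hSV v hv)).1
  calc S.card ≤ C.card := Finset.card_le_card_of_injOn f hmaps hinj
    _ = m := hF0.1
end

section
/- Let B_0 be an edge set on a finite vertex set in which every vertex of a set L is joined by an edge of B_0 to one of m fixed vertices c_1, …, c_m, where c_1, …, c_m ∉ L. If A is an edge set such that the graph with edge set A ∪ B_0 is acyclic, then every vertex u ∉ L ∪ {c_1, …, c_m} is joined by edges of A to at most m vertices of L. -/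
open Finset

/-- Let `B₀` be an edge set on a finite vertex set in which every vertex of
a set `L` is joined by an edge of `B₀` to one of the vertices of a set `C` (of `m = |C|`
vertices), where `C` is disjoint from `L`. If `A` is an edge set such that the graph with
edge set `A ∪ B₀` is acyclic, then every vertex `u ∉ L ∪ C` is joined by edges of `A` to at
most `m = |C|` vertices of `L`. -/
theorem acyclic_union_degree_bound {α : Type*} [Fintype α] [DecidableEq α]
    (B0 A : Finset (Sym2 α)) (L C : Finset α) (hLC : Disjoint L C)
    (hB0 : ∀ v ∈ L, ∃ c ∈ C, s(v, c) ∈ B0)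
    (hacyc : (SimpleGraph.fromEdgeSet ((A ∪ B0 : Finset (Sym2 α)) : Set (Sym2 α))).IsAcyclic) :
    ∀ u : α, u ∉ L → u ∉ C → (L.filter (fun v => s(u, v) ∈ A)).card ≤ C.card := by
  classical
  intro u huL huC
  by_contra hlt
  push_neg at hlt
  set G := SimpleGraph.fromEdgeSet ((A ∪ B0 : Finset (Sym2 α)) : Set (Sym2 α)) with hG
  -- choice of a neighbor in C for each v ∈ L
  have hf : ∀ v ∈ L.filter (fun v => s(u, v) ∈ A),
      (fun v => if h : v ∈ L then (hB0 v h).choose else v) v ∈ C := by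
    intro v hv
    rw [mem_filter] at hv
    simp only [dif_pos hv.1]
    exact (hB0 v hv.1).choose_spec.1
  obtain ⟨v1, hv1, v2, hv2, hne, heq⟩ :=
    Finset.exists_ne_map_eq_of_card_lt_of_maps_to hlt hf
  rw [mem_filter] at hv1 hv2
  rw [dif_pos hv1.1, dif_pos hv2.1] at heq
  set c := (hB0 v1 hv1.1).choose with hc
  have hcC : c ∈ C := (hB0 v1 hv1.1).choose_spec.1
  have hB1 : s(v1, c) ∈ B0 := (hB0 v1 hv1.1).choose_spec.2
  have hB2 : s(v2, c) ∈ B0 := heq ▸ (hB0 v2 hv2.1).choose_spec.2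
  have huc : u ≠ c := fun h => huC (h ▸ hcC)
  have hv1c : v1 ≠ c := fun h => (Finset.disjoint_left.mp hLC hv1.1) (h ▸ hcC)
  have hv2c : v2 ≠ c := fun h => (Finset.disjoint_left.mp hLC hv2.1) (h ▸ hcC)
  have huv1 : u ≠ v1 := fun h => huL (h ▸ hv1.1)
  have huv2 : u ≠ v2 := fun h => huL (h ▸ hv2.1)
  have adj : ∀ a b : α, a ≠ b → s(a, b) ∈ (A ∪ B0 : Finset (Sym2 α)) → G.Adj a b := by
    intro a b hab hmem
    rw [hG, SimpleGraph.fromEdgeSet_adj]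
    exact ⟨by exact_mod_cast hmem, hab⟩
  have a1 : G.Adj u v1 := adj u v1 huv1 (mem_union_left _ hv1.2)
  have a2 : G.Adj v1 c := adj v1 c hv1c (mem_union_right _ hB1)
  have a3 : G.Adj u v2 := adj u v2 huv2 (mem_union_left _ hv2.2)
  have a4 : G.Adj v2 c := adj v2 c hv2c (mem_union_right _ hB2)
  let p1 : G.Walk u c := .cons a1 (.cons a2 .nil)
  let p2 : G.Walk u c := .cons a3 (.cons a4 .nil)
  have hp1 : p1.IsPath := by
    simp [p1, SimpleGraph.Walk.isPath_def, huv1, huc, hv1c]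
  have hp2 : p2.IsPath := by
    simp [p2, SimpleGraph.Walk.isPath_def, huv2, huc, hv2c]
  have := hacyc.path_unique ⟨p1, hp1⟩ ⟨p2, hp2⟩
  have hsupp : p1.support = p2.support := by
    rw [Subtype.mk.injEq] at this
    rw [this]
  simp only [p1, p2, SimpleGraph.Walk.support_cons, SimpleGraph.Walk.support_nil] at hsupp
  simp at hsupp
  exact hne hsupp
end

section
/- For all integers a, b, x with 0 ≤ b, 0 ≤ x and b + x < a, the following inequalities hold: ((a−b−x)/(a−x))^x ≤ C(a−x, b)/C(a, b) ≤ ((a−b)/a)^x, where C(·,·) denotes the binomial coefficient. -/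
/-- For all integers `a, b, x ≥ 0` with `b + x < a`:
`((a−b−x)/(a−x))^x ≤ C(a−x, b)/C(a, b) ≤ ((a−b)/a)^x`. -/
theorem choose_ratio_bounds (a b x : ℕ) (h : b + x < a) :
    (((a : ℝ) - b - x) / ((a : ℝ) - x)) ^ x ≤ ((a - x).choose b : ℝ) / (a.choose b : ℝ) ∧
    ((a - x).choose b : ℝ) / (a.choose b : ℝ) ≤ (((a : ℝ) - b) / (a : ℝ)) ^ x := by
  induction x generalizing a with
  | zero =>
    have hc : 0 < (a.choose b : ℝ) := by
      exact_mod_cast Nat.choose_pos (by omega)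
    simp [div_self hc.ne']
  | succ x ih =>
    have ha1 : 1 ≤ a := by omega
    have hsub : a - (x + 1) = (a - 1) - x := by omega
    have ih' := ih (a - 1) (by omega)
    have hcast : ((a - 1 : ℕ) : ℝ) = (a : ℝ) - 1 := by
      push_cast [Nat.cast_sub ha1]; ring
    rw [hcast] at ih'
    have hc0 : 0 < (a.choose b : ℝ) := by
      exact_mod_cast Nat.choose_pos (by omega)
    have hc1 : 0 < (((a - 1).choose b : ℕ) : ℝ) := by
      exact_mod_cast Nat.choose_pos (by omega)
    have hc2 : 0 < ((((a - 1) - x).choose b : ℕ) : ℝ) := by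
      exact_mod_cast Nat.choose_pos (by omega)
    have key : (((a - 1).choose b : ℕ) : ℝ) * a = (a.choose b : ℝ) * ((a : ℝ) - b) := by
      have hk := Nat.choose_mul_succ_eq (a - 1) b
      rw [Nat.sub_add_cancel ha1] at hk
      have hk' := congrArg (Nat.cast : ℕ → ℝ) hk
      push_cast [Nat.cast_sub (show b ≤ a by omega)] at hk'
      linarith [hk']
    have hsplit : (((a - (x + 1)).choose b : ℕ) : ℝ) / (a.choose b : ℝ)
        = ((((a - 1) - x).choose b : ℕ) : ℝ) / (((a - 1).choose b : ℕ) : ℝ)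
          * (((a : ℝ) - b) / (a : ℝ)) := by
      rw [hsub, div_mul_div_comm, div_eq_div_iff hc0.ne' (by positivity)]
      linear_combination ((((a - 1) - x).choose b : ℕ) : ℝ) * key
    have hA : (0 : ℝ) < a := by positivity
    have hbx : ((b : ℝ) + (x + 1)) + 1 ≤ a := by exact_mod_cast h
    have hL0 : (0 : ℝ) ≤ ((a : ℝ) - b - (x + 1)) / ((a : ℝ) - (x + 1)) := by
      apply div_nonneg <;> linarith
    have hU0 : (0 : ℝ) ≤ ((a : ℝ) - b) / (a : ℝ) := by
      apply div_nonneg <;> linarith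
    have hLU : ((a : ℝ) - b - (x + 1)) / ((a : ℝ) - (x + 1)) ≤ ((a : ℝ) - b) / (a : ℝ) := by
      rw [div_le_div_iff₀ (by linarith) hA]; nlinarith [Nat.cast_nonneg (α := ℝ) b]
    have hL'U : ((a : ℝ) - 1 - b) / ((a : ℝ) - 1) ≤ ((a : ℝ) - b) / (a : ℝ) := by
      rw [div_le_div_iff₀ (by linarith) hA]; nlinarith [Nat.cast_nonneg (α := ℝ) b]
    have hL'0 : (0 : ℝ) ≤ ((a : ℝ) - 1 - b) / ((a : ℝ) - 1) := by
      apply div_nonneg <;> linarith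
    have eL : ((a : ℝ) - 1 - b - x) / ((a : ℝ) - 1 - x)
        = ((a : ℝ) - b - (x + 1)) / ((a : ℝ) - (x + 1)) := by ring_nf
    rw [eL] at ih'
    push_cast
    rw [hsplit]
    constructor
    · calc (((a : ℝ) - b - (x + 1)) / ((a : ℝ) - (x + 1))) ^ (x + 1)
          = (((a : ℝ) - b - (x + 1)) / ((a : ℝ) - (x + 1))) ^ x
            * (((a : ℝ) - b - (x + 1)) / ((a : ℝ) - (x + 1))) := by ring
        _ ≤ ((((a - 1) - x).choose b : ℕ) : ℝ) / (((a - 1).choose b : ℕ) : ℝ)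
            * (((a : ℝ) - b) / (a : ℝ)) := by
            apply mul_le_mul ih'.1 hLU hL0
            positivity
    · calc ((((a - 1) - x).choose b : ℕ) : ℝ) / (((a - 1).choose b : ℕ) : ℝ)
            * (((a : ℝ) - b) / (a : ℝ))
          ≤ (((a : ℝ) - 1 - b) / ((a : ℝ) - 1)) ^ x * (((a : ℝ) - b) / (a : ℝ)) := by
            apply mul_le_mul_of_nonneg_right ih'.2 hU0
        _ ≤ (((a : ℝ) - b) / (a : ℝ)) ^ x * (((a : ℝ) - b) / (a : ℝ)) := by
            apply mul_le_mul_of_nonneg_right (pow_le_pow_left₀ hL'0 hL'U x) hU0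
        _ = (((a : ℝ) - b) / (a : ℝ)) ^ (x + 1) := by ring
end

section
/- Let m, d be positive integers, n = (d+1)·m, and let S ⊆ [n] be a set of s vertices. Then the number of star factors of K_n having no star center in S is at most |ℱ| · e^{−s·m/n}, where |ℱ| is the total number of star factors of K_n. -/
open Finset

section Aux
variable {n m d : ℕ}

def mapF (σ : Equiv.Perm (Fin n)) (F : Finset (Sym2 (Fin n))) : Finset (Sym2 (Fin n)) :=
  F.image (Sym2.map σ)

lemma mapF_mapF (σ : Equiv.Perm (Fin n)) (F : Finset (Sym2 (Fin n))) :
    mapF σ.symm (mapF σ F) = F := by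
  unfold mapF
  rw [Finset.image_image]
  have h : (Sym2.map ⇑σ.symm ∘ Sym2.map ⇑σ) = id := by
    funext e
    rw [Function.comp_apply, Sym2.map_map]
    simp
  rw [h, Finset.image_id]

lemma isStar_mapF (σ : Equiv.Perm (Fin n)) {S : Finset (Sym2 (Fin n))} {z : Fin n}
    (h : IsStar d S z) : IsStar d (mapF σ S) (σ z) := by
  obtain ⟨L, hzL, hLd, hS⟩ := h
  refine ⟨L.image σ, ?_, ?_, ?_⟩
  · simp only [Finset.mem_image, not_exists]
    rintro v ⟨hv, hvz⟩
    exact hzL (σ.injective hvz ▸ hv)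
  · rw [Finset.card_image_of_injective _ σ.injective, hLd]
  · subst hS
    unfold mapF
    rw [Finset.image_image, Finset.image_image]
    apply Finset.image_congr
    intro v _
    simp [Sym2.map_pair_eq]

lemma isCenterOf_mapF (σ : Equiv.Perm (Fin n)) {F : Finset (Sym2 (Fin n))} {z : Fin n}
    (h : IsCenterOf d F z) : IsCenterOf d (mapF σ F) (σ z) := by
  obtain ⟨S, hSF, hS⟩ := h
  exact ⟨mapF σ S, Finset.image_subset_image hSF, isStar_mapF σ hS⟩

lemma isCenterOf_mapF_iff (σ : Equiv.Perm (Fin n)) {F : Finset (Sym2 (Fin n))} {z : Fin n} :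
    IsCenterOf d (mapF σ F) z ↔ IsCenterOf d F (σ.symm z) := by
  constructor
  · intro h
    have := isCenterOf_mapF σ.symm h
    rwa [mapF_mapF] at this
  · intro h
    have := isCenterOf_mapF σ h
    rwa [σ.apply_symm_apply] at this

lemma isStarFactor_mapF (σ : Equiv.Perm (Fin n)) {F : Finset (Sym2 (Fin n))}
    (h : IsStarFactor m d F) : IsStarFactor m d (mapF σ F) := by
  obtain ⟨C, L, hC, hL, hdisj, huniv, hF⟩ := h
  refine ⟨C.image σ, fun z => (L (σ.symm z)).image σ, ?_, ?_, ?_, ?_, ?_⟩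
  · rw [Finset.card_image_of_injective _ σ.injective, hC]
  · intro z hz
    obtain ⟨c, hc, rfl⟩ := Finset.mem_image.mp hz
    dsimp only
    rw [σ.symm_apply_apply]
    constructor
    · simp only [Finset.mem_image, not_exists]
      rintro v ⟨hv, hvz⟩
      exact (hL c hc).1 (σ.injective hvz ▸ hv)
    · rw [Finset.card_image_of_injective _ σ.injective, (hL c hc).2]
  · intro z hz z' hz' hne
    obtain ⟨c, hc, rfl⟩ := Finset.mem_image.mp hz
    obtain ⟨c', hc', rfl⟩ := Finset.mem_image.mp hz'
    have hcc' : c ≠ c' := fun e => hne (by rw [e])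
    have := hdisj c hc c' hc' hcc'
    dsimp only
    rw [σ.symm_apply_apply, σ.symm_apply_apply, ← Finset.image_insert, ← Finset.image_insert]
    exact (Finset.disjoint_image σ.injective).mpr this
  · rw [Finset.image_biUnion]
    have : ∀ c ∈ C, insert (σ c) ((L (σ.symm (σ c))).image σ) = (insert c (L c)).image σ := by
      intro c _
      rw [σ.symm_apply_apply, Finset.image_insert]
    rw [Finset.biUnion_congr rfl this, ← Finset.biUnion_image, huniv]
    exact Finset.image_univ_equiv σ
  · unfold mapF
    rw [hF, Finset.biUnion_image, Finset.image_biUnion]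
    apply Finset.biUnion_congr rfl
    intro c _
    dsimp only
    rw [σ.symm_apply_apply, Finset.image_image, Finset.image_image]
    apply Finset.image_congr
    intro v _
    simp [Sym2.map_pair_eq]

lemma isStarFactor_mapF_iff (σ : Equiv.Perm (Fin n)) {F : Finset (Sym2 (Fin n))} :
    IsStarFactor m d (mapF σ F) ↔ IsStarFactor m d F := by
  constructor
  · intro h; have := isStarFactor_mapF σ.symm h; rwa [mapF_mapF] at this
  · exact isStarFactor_mapF σ

lemma isCenterOf_of_mem_centers {F : Finset (Sym2 (Fin n))} {C : Finset (Fin n)}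
    {L : Fin n → Finset (Fin n)} (h : IsStarFactorOn m d F C L) {z : Fin n} (hz : z ∈ C) :
    IsCenterOf d F z := by
  obtain ⟨hC, hL, hdisj, huniv, hF⟩ := h
  refine ⟨(L z).image (fun v => s(z, v)), ?_, ⟨L z, (hL z hz).1, (hL z hz).2, rfl⟩⟩
  rw [hF]
  exact Finset.subset_biUnion_of_mem (fun z => (L z).image (fun v => s(z, v))) hz

end Aux

section Count
variable {n : ℕ}

open scoped Classical in
noncomputable def AF (n m d : ℕ) (S : Finset (Fin n)) : Finset (Finset (Sym2 (Fin n))) :=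
  Finset.univ.filter (fun F => IsStarFactor m d F ∧ ∀ z ∈ S, ¬ IsCenterOf d F z)

open scoped Classical in
lemma mem_AF {m d : ℕ} {S : Finset (Fin n)} {F : Finset (Sym2 (Fin n))} :
    F ∈ AF n m d S ↔ IsStarFactor m d F ∧ ∀ z ∈ S, ¬ IsCenterOf d F z := by
  simp [AF]

open scoped Classical in
lemma swap_aux {m d : ℕ} {S : Finset (Fin n)} {w w' : Fin n} (hw : w ∉ S) (hw' : w' ∉ S)
    {F : Finset (Sym2 (Fin n))} (hF : F ∈ (AF n m d S).filter (fun F => IsCenterOf d F w)) :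
    mapF (Equiv.swap w w') F ∈ (AF n m d S).filter (fun F => IsCenterOf d F w') := by
  rw [Finset.mem_filter, mem_AF] at hF ⊢
  obtain ⟨⟨hsf, havoid⟩, hcen⟩ := hF
  refine ⟨⟨isStarFactor_mapF _ hsf, ?_⟩, ?_⟩
  · intro z hz hc
    rw [isCenterOf_mapF_iff] at hc
    rw [Equiv.symm_swap, Equiv.swap_apply_of_ne_of_ne (fun h => hw (by rwa [h] at hz))
      (fun h => hw' (by rwa [h] at hz))] at hc
    exact havoid z hz hc
  · rw [isCenterOf_mapF_iff, Equiv.symm_swap, Equiv.swap_apply_right]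
    exact hcen

open scoped Classical in
lemma count_swap {m d : ℕ} {S : Finset (Fin n)} {w w' : Fin n} (hw : w ∉ S) (hw' : w' ∉ S) :
    ((AF n m d S).filter (fun F => IsCenterOf d F w)).card
      = ((AF n m d S).filter (fun F => IsCenterOf d F w')).card := by
  apply Finset.card_bij' (fun F _ => mapF (Equiv.swap w w') F)
    (fun F _ => mapF (Equiv.swap w w') F)
  · intro F hF; exact swap_aux hw hw' hF
  · intro F hF; rw [Equiv.swap_comm]; exact swap_aux hw' hw hF
  · intro F _
    have := mapF_mapF (Equiv.swap w w') F
    rwa [Equiv.symm_swap] at this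
  · intro F _
    have := mapF_mapF (Equiv.swap w w') F
    rwa [Equiv.symm_swap] at this

open scoped Classical in
lemma step_lemma (m d : ℕ) {S : Finset (Fin n)} {a : Fin n} (ha : a ∉ S) :
    n * (AF n m d (insert a S)).card + m * (AF n m d S).card ≤ n * (AF n m d S).card := by
  set c := ((AF n m d S).filter (fun F => IsCenterOf d F a)).card with hc
  -- split AF S
  have hsplit : c + (AF n m d (insert a S)).card = (AF n m d S).card := by
    have h1 : AF n m d (insert a S) = (AF n m d S).filter (fun F => ¬ IsCenterOf d F a) := by
      ext F
      simp only [mem_AF, Finset.mem_filter, Finset.mem_insert]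
      constructor
      · rintro ⟨hsf, hav⟩
        exact ⟨⟨hsf, fun z hz => hav z (Or.inr hz)⟩, hav a (Or.inl rfl)⟩
      · rintro ⟨⟨hsf, hav⟩, hna⟩
        refine ⟨hsf, fun z hz => ?_⟩
        rcases hz with rfl | hz
        · exact hna
        · exact hav z hz
    rw [h1]
    exact Finset.card_filter_add_card_filter_not _
  -- all counts equal and lower bound for sum
  have hsum : ∑ w ∈ Finset.univ \ S, ((AF n m d S).filter (fun F => IsCenterOf d F w)).card
      = ∑ F ∈ AF n m d S, ((Finset.univ \ S).filter (fun w => IsCenterOf d F w)).card := by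
    simp only [Finset.card_filter]
    exact Finset.sum_comm
  have hlow : m * (AF n m d S).card
      ≤ ∑ w ∈ Finset.univ \ S, ((AF n m d S).filter (fun F => IsCenterOf d F w)).card := by
    rw [hsum]
    calc m * (AF n m d S).card = ∑ _F ∈ AF n m d S, m := by
          rw [Finset.sum_const, smul_eq_mul, mul_comm]
      _ ≤ ∑ F ∈ AF n m d S, ((Finset.univ \ S).filter (fun w => IsCenterOf d F w)).card := by
          apply Finset.sum_le_sum
          intro F hF
          obtain ⟨hsf, hav⟩ := mem_AF.mp hF
          obtain ⟨C, L, hon⟩ := hsf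
          have hCsub : C ⊆ (Finset.univ \ S).filter (fun w => IsCenterOf d F w) := by
            intro z hz
            have hcen := isCenterOf_of_mem_centers hon hz
            rw [Finset.mem_filter, Finset.mem_sdiff]
            exact ⟨⟨Finset.mem_univ z, fun hzS => hav z hzS hcen⟩, hcen⟩
          calc m = C.card := hon.1.symm
            _ ≤ _ := Finset.card_le_card hCsub
  have heq : ∀ w ∈ Finset.univ \ S, ((AF n m d S).filter (fun F => IsCenterOf d F w)).card = c := by
    intro w hw
    rw [Finset.mem_sdiff] at hw
    exact count_swap hw.2 ha
  have hsum2 : ∑ w ∈ Finset.univ \ S, ((AF n m d S).filter (fun F => IsCenterOf d F w)).card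
      = (Finset.univ \ S).card * c := by
    rw [Finset.sum_congr rfl heq, Finset.sum_const, smul_eq_mul]
  have hcard : (Finset.univ \ S).card ≤ n := by
    have h1 : (Finset.univ \ S).card ≤ (Finset.univ : Finset (Fin n)).card :=
      Finset.card_le_card Finset.sdiff_subset
    simpa using h1
  have hmc : m * (AF n m d S).card ≤ n * c := by
    calc m * (AF n m d S).card ≤ (Finset.univ \ S).card * c := by rw [← hsum2]; exact hlow
    _ ≤ n * c := Nat.mul_le_mul_right c hcard
  calc n * (AF n m d (insert a S)).card + m * (AF n m d S).card
      ≤ n * (AF n m d (insert a S)).card + n * c := Nat.add_le_add_left hmc _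
    _ = n * (c + (AF n m d (insert a S)).card) := by ring
    _ = n * (AF n m d S).card := by rw [hsplit]

end Count

section Main
variable {n : ℕ}

lemma main_ind (m d : ℕ) (hn : 0 < n) (hmn : m ≤ n) (S : Finset (Fin n)) :
    ((AF n m d S).card : ℝ) ≤ ((AF n m d ∅).card : ℝ) * (((n : ℝ) - m) / n) ^ S.card := by
  induction S using Finset.induction_on with
  | empty => simp
  | @insert a S ha ih =>
    have hstep := step_lemma (n := n) m d ha
    have hreal : (n : ℝ) * (AF n m d (insert a S)).card + m * (AF n m d S).card
        ≤ n * (AF n m d S).card := by exact_mod_cast hstep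
    have hnR : (0 : ℝ) < n := by exact_mod_cast hn
    have h2 : ((AF n m d (insert a S)).card : ℝ)
        ≤ (((n : ℝ) - m) / n) * (AF n m d S).card := by
      rw [div_mul_eq_mul_div, le_div_iff₀ hnR]
      nlinarith
    have hr0 : (0 : ℝ) ≤ ((n : ℝ) - m) / n := by
      apply div_nonneg _ hnR.le
      have : (m : ℝ) ≤ n := by exact_mod_cast hmn
      linarith
    calc ((AF n m d (insert a S)).card : ℝ)
        ≤ (((n : ℝ) - m) / n) * (AF n m d S).card := h2
      _ ≤ (((n : ℝ) - m) / n) * (((AF n m d ∅).card : ℝ) * (((n : ℝ) - m) / n) ^ S.card) :=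
          mul_le_mul_of_nonneg_left ih hr0
      _ = ((AF n m d ∅).card : ℝ) * (((n : ℝ) - m) / n) ^ (insert a S).card := by
          rw [Finset.card_insert_of_notMem ha, pow_succ]
          ring

open scoped Classical in
theorem star_factors_avoiding_centers_bound' (m d : ℕ) (hm : 0 < m) (hd : 0 < d)
    (n : ℕ) (hn : n = (d + 1) * m) (S : Finset (Fin n)) :
    (({F : Finset (Sym2 (Fin n)) |
        IsStarFactor m d F ∧ ∀ z ∈ S, ¬ IsCenterOf d F z}).ncard : ℝ) ≤
      ({F : Finset (Sym2 (Fin n)) | IsStarFactor m d F}.ncard : ℝ) *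
        Real.exp (-((S.card : ℝ) * m / n)) := by
  have hn0 : 0 < n := by rw [hn]; positivity
  have hmn : m ≤ n := by
    rw [hn]; nlinarith
  -- identify ncards with AF cards
  have e1 : ({F : Finset (Sym2 (Fin n)) |
      IsStarFactor m d F ∧ ∀ z ∈ S, ¬ IsCenterOf d F z}).ncard = (AF n m d S).card := by
    rw [Set.ncard_eq_toFinset_card', Set.toFinset_setOf, AF]
  have e2 : ({F : Finset (Sym2 (Fin n)) | IsStarFactor m d F}).ncard
      = (AF n m d (∅ : Finset (Fin n))).card := by
    rw [Set.ncard_eq_toFinset_card', Set.toFinset_setOf, AF]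
    congr 1
    ext F
    simp
  rw [e1, e2]
  have hmain := main_ind m d hn0 hmn S
  refine hmain.trans ?_
  apply mul_le_mul_of_nonneg_left _ (by positivity)
  -- ((n - m)/n)^s ≤ exp(-(s*m/n))
  have hnR : (0 : ℝ) < n := by exact_mod_cast hn0
  have hmR : (m : ℝ) ≤ n := by exact_mod_cast hmn
  have hr0 : (0 : ℝ) ≤ ((n : ℝ) - m) / n := by
    apply div_nonneg _ hnR.le; linarith
  have hbase : ((n : ℝ) - m) / n ≤ Real.exp (-((m : ℝ) / n)) := by
    have := Real.add_one_le_exp (-((m : ℝ) / n))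
    have heq : ((n : ℝ) - m) / n = -((m : ℝ) / n) + 1 := by field_simp; ring
    rw [heq]
    exact this
  calc (((n : ℝ) - m) / n) ^ S.card ≤ (Real.exp (-((m : ℝ) / n))) ^ S.card :=
        pow_le_pow_left₀ hr0 hbase S.card
    _ = Real.exp (-((S.card : ℝ) * m / n)) := by
        rw [← Real.exp_nat_mul]
        congr 1
        ring

end Main


/-- Let `m, d` be positive integers, `n = (d+1)·m`, and `S ⊆ [n]` a set of
`s` vertices. The number of star factors of `K_n` having no star center in `S` is at most
`|ℱ| · e^(−s·m/n)`. -/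
theorem star_factors_avoiding_centers_bound (m d : ℕ) (hm : 0 < m) (hd : 0 < d)
    (n : ℕ) (hn : n = (d + 1) * m) (S : Finset (Fin n)) :
    (({F : Finset (Sym2 (Fin n)) |
        IsStarFactor m d F ∧ ∀ z ∈ S, ¬ IsCenterOf d F z}).ncard : ℝ) ≤
      ({F : Finset (Sym2 (Fin n)) | IsStarFactor m d F}.ncard : ℝ) *
        Real.exp (-((S.card : ℝ) * m / n)) :=
  star_factors_avoiding_centers_bound' m d hm hd n hn S
end

section
/- Let n ≥ 1, K, d be integers with 0 ≤ K ≤ n and 0 ≤ d ≤ n, let ε > 0 be a real number, and let m ≥ 0 be an integer with m ≤ (K/n − ε)·d. Then Σ_{i=0}^{m} C(K, i)·C(n−K, d−i) / C(n, d) ≤ e^{−2·ε²·d}. -/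
open Real Finset

private lemma deriv_g {q : ℝ} {y : ℝ} (hy0 : 0 < y) (hy1 : y < 1) :
    HasDerivAt (fun t : ℝ => Real.log t - Real.log q - Real.log (1 - t) + Real.log (1 - q)
      - 4 * (t - q)) (1 / y + 1 / (1 - y) - 4) y := by
  have h1 : HasDerivAt (fun t : ℝ => Real.log t) (1 / y) y := by
    simpa [one_div] using Real.hasDerivAt_log hy0.ne'
  have h2 : HasDerivAt (fun t : ℝ => (1 : ℝ) - t) (-1) y :=
    HasDerivAt.const_sub 1 (hasDerivAt_id y)
  have h3 : HasDerivAt (fun t : ℝ => Real.log (1 - t)) (-(1 / (1 - y))) y := by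
    have := h2.log (by linarith : (1 : ℝ) - y ≠ 0)
    convert this using 1
    field_simp
  have h4 : HasDerivAt (fun t : ℝ => 4 * (t - q)) 4 y := by
    simpa using (((hasDerivAt_id y).sub_const q).const_mul (4 : ℝ))
  have := (((h1.sub_const (Real.log q)).sub h3).add_const (Real.log (1 - q))).sub h4
  refine this.congr_deriv ?_
  ring

private lemma g_nonneg {q t : ℝ} (hq : 0 < q) (hqt : q ≤ t) (ht : t < 1) :
    0 ≤ Real.log t - Real.log q - Real.log (1 - t) + Real.log (1 - q) - 4 * (t - q) := by
  set g : ℝ → ℝ := fun t => Real.log t - Real.log q - Real.log (1 - t) + Real.log (1 - q)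
      - 4 * (t - q) with hg
  have hmem : ∀ y ∈ Set.Ico q 1, 0 < y ∧ y < 1 := fun y hy => ⟨lt_of_lt_of_le hq hy.1, hy.2⟩
  have hmono : MonotoneOn g (Set.Ico q 1) := by
    apply monotoneOn_of_deriv_nonneg (convex_Ico q 1)
    · apply ContinuousOn.sub
      apply ContinuousOn.add
      apply ContinuousOn.sub
      apply ContinuousOn.sub
      · exact Real.continuousOn_log.mono (by intro y hy; exact (hmem y hy).1.ne')
      · exact continuousOn_const
      · apply ContinuousOn.log (by fun_prop)
        intro y hy; have := (hmem y hy).2; intro h; rw [sub_eq_zero] at h; linarith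
      · exact continuousOn_const
      · fun_prop
    · intro y hy
      rw [interior_Ico] at hy
      exact (deriv_g (lt_trans hq hy.1) hy.2).differentiableAt.differentiableWithinAt
    · intro y hy
      rw [interior_Ico] at hy
      have h0 : 0 < y := lt_trans hq hy.1
      rw [(deriv_g h0 hy.2).deriv]
      have h1 : 0 < 1 - y := by linarith [hy.2]
      have h2 : 0 < y * (1 - y) := mul_pos h0 h1
      rw [sub_nonneg, div_add_div _ _ h0.ne' h1.ne', le_div_iff₀ h2]
      nlinarith [sq_nonneg (2*y - 1)]
  have hq0 : g q = 0 := by simp [hg]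
  have h := hmono (Set.mem_Ico.2 ⟨le_refl q, lt_of_le_of_lt hqt ht⟩) (Set.mem_Ico.2 ⟨hqt, ht⟩) hqt
  rw [hq0] at h
  exact h

private lemma deriv_f {q : ℝ} {y : ℝ} (hy0 : 0 < y) (hy1 : y < 1) :
    HasDerivAt (fun t : ℝ => t * (Real.log t - Real.log q)
      + (1 - t) * (Real.log (1 - t) - Real.log (1 - q)) - 2 * (t - q) ^ 2)
      (Real.log y - Real.log q - Real.log (1 - y) + Real.log (1 - q) - 4 * (y - q)) y := by
  have h1 : HasDerivAt (fun t : ℝ => Real.log t) y⁻¹ y := Real.hasDerivAt_log hy0.ne'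
  have h2 : HasDerivAt (fun t : ℝ => (1 : ℝ) - t) (-1) y :=
    HasDerivAt.const_sub 1 (hasDerivAt_id y)
  have h1y : (1 : ℝ) - y ≠ 0 := by intro h; rw [sub_eq_zero] at h; linarith
  have h3 : HasDerivAt (fun t : ℝ => Real.log (1 - t)) (-1 / (1 - y)) y := h2.log h1y
  have hA : HasDerivAt (fun t : ℝ => t * (Real.log t - Real.log q))
      (1 * (Real.log y - Real.log q) + y * y⁻¹) y :=
    (hasDerivAt_id y).mul (h1.sub_const (Real.log q))
  have hB : HasDerivAt (fun t : ℝ => (1 - t) * (Real.log (1 - t) - Real.log (1 - q)))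
      ((-1) * (Real.log (1 - y) - Real.log (1 - q)) + (1 - y) * (-1 / (1 - y))) y :=
    h2.mul (h3.sub_const (Real.log (1 - q)))
  have hC : HasDerivAt (fun t : ℝ => 2 * (t - q) ^ 2) (2 * (2 * (y - q))) y := by
    have := (((hasDerivAt_id y).sub_const q).pow 2).const_mul (2 : ℝ)
    simpa using this
  have := (hA.add hB).sub hC
  refine this.congr_deriv ?_
  field_simp
  ring

private lemma pinsker_aux {q t : ℝ} (hq : 0 < q) (hqt : q ≤ t) (ht : t < 1) :
    2 * (t - q) ^ 2 ≤ t * (Real.log t - Real.log q)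
      + (1 - t) * (Real.log (1 - t) - Real.log (1 - q)) := by
  set f : ℝ → ℝ := fun t => t * (Real.log t - Real.log q)
      + (1 - t) * (Real.log (1 - t) - Real.log (1 - q)) - 2 * (t - q) ^ 2 with hf
  have hmem : ∀ y ∈ Set.Ico q 1, 0 < y ∧ y < 1 := fun y hy => ⟨lt_of_lt_of_le hq hy.1, hy.2⟩
  have hmono : MonotoneOn f (Set.Ico q 1) := by
    apply monotoneOn_of_deriv_nonneg (convex_Ico q 1)
    · apply ContinuousOn.sub
      apply ContinuousOn.add
      · apply ContinuousOn.mul (by fun_prop)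
        apply ContinuousOn.sub _ continuousOn_const
        exact Real.continuousOn_log.mono (by intro y hy; exact (hmem y hy).1.ne')
      · apply ContinuousOn.mul (by fun_prop)
        apply ContinuousOn.sub _ continuousOn_const
        apply ContinuousOn.log (by fun_prop)
        intro y hy; have := (hmem y hy).2; intro h; rw [sub_eq_zero] at h; linarith
      · fun_prop
    · intro y hy
      rw [interior_Ico] at hy
      exact (deriv_f (lt_trans hq hy.1) hy.2).differentiableAt.differentiableWithinAt
    · intro y hy
      rw [interior_Ico] at hy
      rw [(deriv_f (lt_trans hq hy.1) hy.2).deriv]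
      exact g_nonneg hq (le_of_lt hy.1) hy.2
  have hq0 : f q = 0 := by simp [hf]
  have h := hmono (Set.mem_Ico.2 ⟨le_refl q, lt_of_le_of_lt hqt ht⟩) (Set.mem_Ico.2 ⟨hqt, ht⟩) hqt
  rw [hq0] at h
  simp only [hf] at h
  linarith

private lemma pinsker_one {q : ℝ} (hq : 0 < q) (hq1 : q ≤ 1) :
    2 * (1 - q) ^ 2 ≤ -Real.log q := by
  set f : ℝ → ℝ := fun t => -Real.log t - 2 * (1 - t) ^ 2 with hf
  have hanti : AntitoneOn f (Set.Ioc 0 1) := by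
    apply antitoneOn_of_deriv_nonpos (convex_Ioc 0 1)
    · apply ContinuousOn.sub _ (by fun_prop)
      apply ContinuousOn.neg
      exact Real.continuousOn_log.mono (by intro y hy; exact (Set.mem_Ioc.1 hy).1.ne')
    · intro y hy
      rw [interior_Ioc] at hy
      have h1 : HasDerivAt f (-y⁻¹ - 2 * (2 * (1 - y) * (-1))) y := by
        apply HasDerivAt.sub ((Real.hasDerivAt_log hy.1.ne').neg)
        have := (((hasDerivAt_id y).const_sub 1).pow 2).const_mul (2 : ℝ)
        simpa [mul_comm] using this
      exact h1.differentiableAt.differentiableWithinAt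
    · intro y hy
      rw [interior_Ioc] at hy
      have h1 : HasDerivAt f (-y⁻¹ - 2 * (2 * (1 - y) * (-1))) y := by
        apply HasDerivAt.sub ((Real.hasDerivAt_log hy.1.ne').neg)
        have := (((hasDerivAt_id y).const_sub 1).pow 2).const_mul (2 : ℝ)
        simpa [mul_comm] using this
      rw [h1.deriv]
      have h0 := hy.1
      have h2 := hy.2
      have hkey : 4 * (1 - y) ≤ y⁻¹ := by
        rw [inv_eq_one_div, le_div_iff₀ h0]
        nlinarith [sq_nonneg (2 * y - 1)]
      linarith
  have h1 : f 1 = 0 := by simp [hf]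
  have h := hanti (Set.mem_Ioc.2 ⟨hq, hq1⟩) (Set.mem_Ioc.2 ⟨one_pos, le_refl 1⟩) hq1
  rw [h1] at h
  simp only [hf] at h
  linarith

private lemma nat_choose_ratio {n K : ℕ} (hK : K ≤ n) : ∀ j, n ^ j * K.choose j ≤ K ^ j * n.choose j
  | 0 => by simp
  | (j+1) => by
    rcases le_or_gt K j with h | h
    · have h0 : K.choose (j+1) = 0 := Nat.choose_eq_zero_of_lt (Nat.lt_succ_of_le h)
      simp [h0]
    · have IH := nat_choose_ratio hK j
      have h1 : j ≤ K := le_of_lt h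
      have h2 : j ≤ n := le_trans h1 hK
      have hmul : n * (K - j) ≤ K * (n - j) := by
        zify [h1, h2]
        nlinarith [mul_le_mul_of_nonneg_right (show (K:ℤ) ≤ n by exact_mod_cast hK)
          (show (0:ℤ) ≤ j by positivity)]
      have e1 : K.choose (j+1) * (j+1) = K.choose j * (K - j) := Nat.choose_succ_right_eq K j
      have e2 : n.choose (j+1) * (j+1) = n.choose j * (n - j) := Nat.choose_succ_right_eq n j
      apply Nat.le_of_mul_le_mul_right _ (Nat.succ_pos j)
      calc n ^ (j+1) * K.choose (j+1) * (j + 1)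
          = n * (K - j) * (n ^ j * K.choose j) := by rw [mul_assoc, e1]; ring
        _ ≤ n * (K - j) * (K ^ j * n.choose j) := Nat.mul_le_mul (le_refl _) IH
        _ ≤ K * (n - j) * (K ^ j * n.choose j) := Nat.mul_le_mul hmul (le_refl _)
        _ = K ^ (j+1) * n.choose (j+1) * (j + 1) := by
            conv_rhs => rw [mul_assoc, e2]
            ring

private lemma nat_trinomial (W t u : ℕ) :
    W.choose (t + u) * (t + u).choose t = W.choose t * (W - t).choose u := by
  rcases le_or_gt (t + u) W with h | h
  · have := Nat.choose_mul (n := W) (Nat.le_add_right t u)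
    rwa [Nat.add_sub_cancel_left] at this
  · have h0 : W.choose (t + u) = 0 := Nat.choose_eq_zero_of_lt h
    rcases le_or_gt t W with h1 | h1
    · have h2 : (W - t).choose u = 0 := Nat.choose_eq_zero_of_lt (by omega)
      simp [h0, h2]
    · have h2 : W.choose t = 0 := Nat.choose_eq_zero_of_lt h1
      simp [h0, h2]

private lemma vandermonde_range (a b k : ℕ) :
    (a + b).choose k = ∑ u ∈ Finset.range (k + 1), a.choose u * b.choose (k - u) := by
  rw [Nat.add_choose_eq, Finset.Nat.sum_antidiagonal_eq_sum_range_succ_mk]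

private lemma hg_inner_sum (W Kk d t : ℕ) (htd : t ≤ d) :
    ∑ j ∈ Finset.range (d + 1), W.choose j * j.choose t * Kk.choose (d - j)
      = W.choose t * (W - t + Kk).choose (d - t) := by
  have hsub : Finset.Ico t (d + 1) ⊆ Finset.range (d + 1) := by
    rw [Finset.range_eq_Ico]; exact Finset.Ico_subset_Ico (Nat.zero_le t) (le_refl _)
  rw [← Finset.sum_subset hsub (by
    intro j hj hj2
    have : j < t := by simp [Finset.mem_Ico, Finset.mem_range] at *; omega
    simp [Nat.choose_eq_zero_of_lt this])]
  rw [Finset.sum_Ico_eq_sum_range]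
  have hlen : d + 1 - t = d - t + 1 := by omega
  rw [hlen, vandermonde_range, Finset.mul_sum]
  apply Finset.sum_congr rfl
  intro u hu
  rw [nat_trinomial W t u]
  have : d - (t + u) = d - t - u := by omega
  rw [this, mul_assoc]

private lemma realA {n W d t : ℕ} (hW : W ≤ n) (hd : d ≤ n) (htd : t ≤ d) (hn : 1 ≤ n) :
    (W.choose t : ℝ) * ((n - t).choose (d - t) : ℝ) ≤
      (n.choose d : ℝ) * (d.choose t : ℝ) * ((W : ℝ) / n) ^ t := by
  have hn0 : (0:ℝ) < (n:ℝ) := by exact_mod_cast hn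
  have hnt : (0:ℝ) < (n:ℝ) ^ t := pow_pos hn0 t
  have hcast : ((n:ℝ)) ^ t * (W.choose t : ℝ) ≤ (W:ℝ) ^ t * (n.choose t : ℝ) := by
    exact_mod_cast nat_choose_ratio hW t
  have h1 : (W.choose t : ℝ) ≤ ((W:ℝ)/n) ^ t * (n.choose t : ℝ) := by
    rw [div_pow, div_mul_eq_mul_div, le_div_iff₀ hnt]
    linarith
  have hid : (n.choose d : ℝ) * (d.choose t : ℝ) = (n.choose t : ℝ) * ((n-t).choose (d-t) : ℝ) := by
    exact_mod_cast Nat.choose_mul htd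
  calc (W.choose t : ℝ) * ((n - t).choose (d - t) : ℝ)
      ≤ ((W:ℝ)/n) ^ t * (n.choose t : ℝ) * ((n - t).choose (d - t) : ℝ) :=
        mul_le_mul_of_nonneg_right h1 (Nat.cast_nonneg _)
    _ = (n.choose t : ℝ) * ((n-t).choose (d-t) : ℝ) * ((W : ℝ) / n) ^ t := by ring
    _ = (n.choose d : ℝ) * (d.choose t : ℝ) * ((W : ℝ) / n) ^ t := by rw [hid]

private lemma realB {n W Kk d : ℕ} (hWK : W + Kk = n) (hd : d ≤ n) (hn : 1 ≤ n)
    {x : ℝ} (hx : 0 ≤ x) :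
    ∑ j ∈ Finset.range (d + 1), (W.choose j : ℝ) * (Kk.choose (d - j) : ℝ) * (1 + x) ^ j
      ≤ (n.choose d : ℝ) * (1 + (W : ℝ) / n * x) ^ d := by
  have hpow : ∀ j ∈ Finset.range (d+1), ((1:ℝ) + x) ^ j
      = ∑ t ∈ Finset.range (d+1), x ^ t * (j.choose t : ℝ) := by
    intro j hj
    rw [Finset.mem_range] at hj
    have h2 : ((x:ℝ) + 1) ^ j = ∑ t ∈ Finset.range (j+1), x ^ t * (j.choose t : ℝ) := by
      rw [add_pow]; simp
    rw [add_comm (1:ℝ) x, h2]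
    apply Finset.sum_subset (Finset.range_subset_range.2 (by omega))
    intro t ht ht2
    rw [Finset.mem_range, not_lt] at ht2
    simp [Nat.choose_eq_zero_of_lt (by omega : j < t)]
  calc ∑ j ∈ Finset.range (d + 1), (W.choose j : ℝ) * (Kk.choose (d - j) : ℝ) * (1 + x) ^ j
      = ∑ j ∈ Finset.range (d+1), ∑ t ∈ Finset.range (d+1),
          x ^ t * ((W.choose j * j.choose t * Kk.choose (d-j) : ℕ) : ℝ) := by
        apply Finset.sum_congr rfl
        intro j hj
        rw [hpow j hj, Finset.mul_sum]
        apply Finset.sum_congr rfl; intro t ht; push_cast; ring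
    _ = ∑ t ∈ Finset.range (d+1),
          x ^ t * ((∑ j ∈ Finset.range (d+1), W.choose j * j.choose t * Kk.choose (d-j) : ℕ) : ℝ) := by
        rw [Finset.sum_comm]
        apply Finset.sum_congr rfl; intro t ht
        rw [Nat.cast_sum, Finset.mul_sum]
    _ = ∑ t ∈ Finset.range (d+1), x ^ t * ((W.choose t * (W - t + Kk).choose (d - t) : ℕ) : ℝ) := by
        apply Finset.sum_congr rfl; intro t ht
        rw [Finset.mem_range] at ht
        rw [hg_inner_sum W Kk d t (by omega)]
    _ ≤ ∑ t ∈ Finset.range (d+1), x ^ t * ((n.choose d : ℝ) * (d.choose t : ℝ) * ((W:ℝ)/n) ^ t) := by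
        apply Finset.sum_le_sum
        intro t ht
        rw [Finset.mem_range] at ht
        apply mul_le_mul_of_nonneg_left _ (pow_nonneg hx t)
        rcases le_or_gt t W with h | h
        · have hWt : W - t + Kk = n - t := by omega
          rw [hWt]
          push_cast
          exact realA (by omega) hd (by omega) hn
        · rw [Nat.choose_eq_zero_of_lt h, zero_mul, Nat.cast_zero]
          positivity
    _ = (n.choose d : ℝ) * (1 + (W : ℝ) / n * x) ^ d := by
        rw [add_comm (1:ℝ) ((W:ℝ)/n*x), add_pow, Finset.mul_sum]
        apply Finset.sum_congr rfl
        intro t ht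
        rw [mul_pow]
        push_cast
        ring

private lemma step2 {Kk W d m : ℕ} (hmd : m ≤ d) {x : ℝ} (hx : 0 ≤ x) :
    (∑ i ∈ Finset.range (m + 1), (Kk.choose i : ℝ) * (W.choose (d - i) : ℝ)) * (1 + x) ^ (d - m)
      ≤ ∑ j ∈ Finset.range (d + 1), (W.choose j : ℝ) * (Kk.choose (d - j) : ℝ) * (1 + x) ^ j := by
  have h1x : (1:ℝ) ≤ 1 + x := by linarith
  set f : ℕ → ℝ := fun j => (W.choose j : ℝ) * (Kk.choose (d - j) : ℝ) * (1 + x) ^ j with hf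
  rw [Finset.sum_mul]
  calc ∑ i ∈ Finset.range (m+1), (Kk.choose i : ℝ) * (W.choose (d - i) : ℝ) * (1+x) ^ (d-m)
      ≤ ∑ i ∈ Finset.range (m+1), f (d - i) := by
        apply Finset.sum_le_sum
        intro i hi
        rw [Finset.mem_range] at hi
        have hii : d - (d - i) = i := by omega
        rw [hf]
        simp only []
        rw [hii]
        calc (Kk.choose i : ℝ) * (W.choose (d - i) : ℝ) * (1+x) ^ (d-m)
            ≤ (Kk.choose i : ℝ) * (W.choose (d - i) : ℝ) * (1+x) ^ (d-i) := by
              apply mul_le_mul_of_nonneg_left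
                (pow_le_pow_right₀ h1x (by omega : d - m ≤ d - i)) (by positivity)
          _ = (W.choose (d-i) : ℝ) * (Kk.choose i : ℝ) * (1+x) ^ (d-i) := by ring
    _ = ∑ j ∈ (Finset.range (m+1)).image (fun i => d - i), f j := by
        rw [Finset.sum_image]
        intro a ha b hb hab
        rw [Finset.mem_coe, Finset.mem_range] at ha hb
        beta_reduce at hab
        omega
    _ ≤ ∑ j ∈ Finset.range (d + 1), f j := by
        apply Finset.sum_le_sum_of_subset_of_nonneg
        · intro j hj
          rw [Finset.mem_image] at hj
          obtain ⟨i, hi, rfl⟩ := hj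
          rw [Finset.mem_range] at *
          omega
        · intro j _ _
          rw [hf]
          positivity

set_option maxHeartbeats 1000000 in
/-- **Hypergeometric tail bound.** Let `n ≥ 1`, `0 ≤ K ≤ n`, `0 ≤ d ≤ n`,
`ε > 0`, and let `m ≥ 0` be an integer with `m ≤ (K/n − ε)·d`. Then
`Σ_{i=0}^m C(K,i)·C(n−K,d−i) / C(n,d) ≤ e^(−2ε²d)`. -/
theorem hypergeometric_tail_bound (n K d : ℕ) (hn : 1 ≤ n) (hK : K ≤ n) (hd : d ≤ n)
    (ε : ℝ) (hε : 0 < ε) (m : ℕ) (hm : (m : ℝ) ≤ ((K : ℝ) / n - ε) * d) :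
    (∑ i ∈ Finset.range (m + 1), ((K.choose i : ℝ) * ((n - K).choose (d - i) : ℝ))) /
        (n.choose d : ℝ) ≤ Real.exp (-2 * ε ^ 2 * d) := by
  have hn0 : (0:ℝ) < (n:ℝ) := by exact_mod_cast hn
  have hchoosepos : (0:ℝ) < (n.choose d : ℝ) := by exact_mod_cast Nat.choose_pos hd
  rw [div_le_iff₀ hchoosepos]
  rcases Nat.eq_zero_or_pos d with hd0 | hdpos
  · subst hd0
    have hm0 : m = 0 := by
      have h1 : (m:ℝ) ≤ 0 := by simpa using hm
      exact_mod_cast le_antisymm (by exact_mod_cast h1) (Nat.zero_le m)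
    subst hm0
    norm_num
  -- d ≥ 1
  have hdR : (0:ℝ) < (d:ℝ) := by exact_mod_cast hdpos
  have hKn1 : (K:ℝ)/n ≤ 1 := by rw [div_le_one hn0]; exact_mod_cast hK
  have hm_lt_d : m < d := by
    by_contra hcon
    push_neg at hcon
    have h2 : (d:ℝ) ≤ m := by exact_mod_cast hcon
    nlinarith
  rcases eq_or_lt_of_le hK with hKn | hKn
  · -- K = n : every term vanishes
    have hz : ∀ i ∈ Finset.range (m+1), (K.choose i : ℝ) * ((n - K).choose (d - i) : ℝ) = 0 := by
      intro i hi
      rw [Finset.mem_range] at hi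
      have h1 : n - K = 0 := by omega
      rw [h1, Nat.choose_eq_zero_of_lt (by omega : 0 < d - i), Nat.cast_zero, mul_zero]
    rw [Finset.sum_eq_zero hz]
    positivity
  -- K < n
  set W : ℕ := n - K with hW
  clear_value W
  have hWpos : 0 < W := by omega
  have hWcast : (W:ℝ) = (n:ℝ) - K := by rw [hW]; push_cast [Nat.cast_sub hK]; ring
  set q : ℝ := (W:ℝ)/n with hq
  clear_value q
  have hq0 : 0 < q := by rw [hq]; positivity
  have hεK : ε ≤ (K:ℝ)/n := by nlinarith [(Nat.cast_nonneg m : (0:ℝ) ≤ (m:ℝ))]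
  have h1q : 1 - q = (K:ℝ)/n := by
    rw [hq, hWcast]; field_simp; ring
  have hq1 : q < 1 := by
    have : 0 < 1 - q := by rw [h1q]; linarith
    linarith
  have hqε : q + ε ≤ 1 := by rw [← h1q] at hεK; linarith
  rcases Nat.eq_zero_or_pos m with hm0 | hmpos
  · -- m = 0 : single term W.choose d
    subst hm0
    have hT : (∑ i ∈ Finset.range (0 + 1), ((K.choose i : ℝ) * ((W).choose (d - i) : ℝ)))
        = (W.choose d : ℝ) := by simp
    rw [hT]
    have hA := realA (show W ≤ n by omega) hd (le_refl d) hn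
    simp only [Nat.sub_self, Nat.choose_zero_right, Nat.choose_self, Nat.cast_one, mul_one,
      one_mul] at hA
    -- hA : (W.choose d : ℝ) ≤ (n.choose d) * q ^ d  (up to form)
    rw [← hq] at hA
    have hp1 := pinsker_one hq0 (le_of_lt hq1)
    have h2 : 2*ε^2 ≤ -Real.log q := by nlinarith
    have hq_exp : q ≤ Real.exp (-(2*ε^2)) := by
      rw [← Real.exp_log hq0]
      exact Real.exp_le_exp.2 (by linarith)
    have hexp_eq : Real.exp (-2*ε^2*d) = (Real.exp (-(2*ε^2)))^d := by
      rw [← Real.exp_nat_mul]; congr 1; ring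
    calc (W.choose d : ℝ) ≤ (n.choose d : ℝ) * q ^ d := hA
      _ ≤ (n.choose d : ℝ) * (Real.exp (-(2*ε^2)))^d := by
          apply mul_le_mul_of_nonneg_left _ (le_of_lt hchoosepos)
          exact pow_le_pow_left₀ (le_of_lt hq0) hq_exp d
      _ = Real.exp (-2*ε^2*d) * (n.choose d : ℝ) := by rw [hexp_eq]; ring
  -- 1 ≤ m < d
  set s : ℕ := d - m with hs
  clear_value s
  have hscast : (s:ℝ) = (d:ℝ) - m := by rw [hs]; push_cast [Nat.cast_sub (le_of_lt hm_lt_d)]; ring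
  set t : ℝ := (s:ℝ)/d with ht
  clear_value t
  have hts : (s:ℝ) = t * d := by rw [ht]; field_simp
  have hqεt : q + ε ≤ t := by
    rw [ht, le_div_iff₀ hdR, hscast]
    have : (1 - q) = (K:ℝ)/n := h1q
    nlinarith
  have ht1 : t < 1 := by
    rw [ht, div_lt_one hdR]
    have : s < d := by omega
    exact_mod_cast this
  have hqt : q < t := by linarith
  have ht0 : 0 < t := lt_trans hq0 hqt
  set x : ℝ := (t - q)/(q*(1-t)) with hx
  clear_value x
  have hden : 0 < q * (1-t) := mul_pos hq0 (by linarith)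
  have hxpos : 0 < x := by rw [hx]; exact div_pos (by linarith) hden
  have hqne : q ≠ 0 := ne_of_gt hq0
  have h1tne : (1:ℝ) - t ≠ 0 := by intro h; rw [sub_eq_zero] at h; exact absurd h.symm (ne_of_lt ht1)
  have hAeq : 1 + q*x = (1-q)/(1-t) := by
    rw [hx]; field_simp; ring
  have hBeq : 1 + x = t*(1-q)/(q*(1-t)) := by
    rw [hx]; field_simp; ring
  have hApos : (0:ℝ) < 1 + q*x := by
    rw [hAeq]; exact div_pos (by linarith) (by linarith)
  have hBpos : (0:ℝ) < 1 + x := by linarith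
  -- log inequality from Pinsker
  have hP := pinsker_aux hq0 (le_of_lt hqt) ht1
  have hKL : 2*ε^2 ≤ t*(Real.log t - Real.log q) + (1-t)*(Real.log (1-t) - Real.log (1-q)) := by
    refine le_trans ?_ hP
    nlinarith
  have l1 : Real.log (1 + q*x) = Real.log (1-q) - Real.log (1-t) := by
    have h1qpos : (0:ℝ) < 1 - q := by linarith
    rw [hAeq, Real.log_div (ne_of_gt h1qpos) h1tne]
  have l2 : Real.log (1 + x)
      = Real.log t + Real.log (1-q) - (Real.log q + Real.log (1-t)) := by
    have h1qpos : (0:ℝ) < 1 - q := by linarith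
    have h1tpos : (0:ℝ) < 1 - t := by linarith
    rw [hBeq, Real.log_div (ne_of_gt (mul_pos ht0 h1qpos)) (ne_of_gt hden),
      Real.log_mul (ne_of_gt ht0) (ne_of_gt h1qpos), Real.log_mul hqne (ne_of_gt h1tpos)]
  have hlog : (d:ℝ) * Real.log (1 + q*x) ≤ -2*ε^2*d + (s:ℝ) * Real.log (1+x) := by
    rw [l1, l2, hts]
    have h3 := mul_le_mul_of_nonneg_left hKL (le_of_lt hdR)
    nlinarith
  have hkey : (1 + q*x)^d ≤ Real.exp (-2*ε^2*(d:ℝ)) * (1+x)^s := by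
    have e1 : ((1+q*x):ℝ)^d = Real.exp ((d:ℝ) * Real.log (1+q*x)) := by
      rw [← Real.exp_log hApos, ← Real.exp_nat_mul, Real.log_exp]
    have e2 : ((1+x):ℝ)^s = Real.exp ((s:ℝ) * Real.log (1+x)) := by
      rw [← Real.exp_log hBpos, ← Real.exp_nat_mul, Real.log_exp]
    rw [e1, e2, ← Real.exp_add]
    exact Real.exp_le_exp.2 hlog
  -- combine
  have hchain : (∑ i ∈ Finset.range (m + 1), ((K.choose i : ℝ) * ((W).choose (d - i) : ℝ)))
      * (1+x)^s ≤ (Real.exp (-2*ε^2*(d:ℝ)) * (n.choose d : ℝ)) * (1+x)^s := by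
    calc (∑ i ∈ Finset.range (m + 1), ((K.choose i : ℝ) * ((W).choose (d - i) : ℝ)))
        * (1+x)^s
        ≤ ∑ j ∈ Finset.range (d + 1), (W.choose j : ℝ) * (K.choose (d - j) : ℝ) * (1 + x) ^ j := by
          have := step2 (Kk := K) (W := W) (le_of_lt hm_lt_d) (le_of_lt hxpos)
          simpa [hW, hs] using this
      _ ≤ (n.choose d : ℝ) * (1 + (W : ℝ) / n * x) ^ d :=
          realB (by omega) hd hn (le_of_lt hxpos)
      _ = (n.choose d : ℝ) * (1 + q * x) ^ d := by rw [hq]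
      _ ≤ (n.choose d : ℝ) * (Real.exp (-2*ε^2*(d:ℝ)) * (1+x)^s) :=
          mul_le_mul_of_nonneg_left hkey (le_of_lt hchoosepos)
      _ = (Real.exp (-2*ε^2*(d:ℝ)) * (n.choose d : ℝ)) * (1+x)^s := by ring
  have := le_of_mul_le_mul_right hchain (pow_pos hBpos s)
  exact this
end

section
/- Let m, d be positive integers, n = (d+1)·m, let z ∈ [n] be a vertex and W ⊆ [n] \ {z} a set of K vertices. Then the number of star factors of K_n that contain a d-star centered at z whose set of leaves contains at most m elements of W is at most (Σ_{i=0}^{m} C(K, i)·C(n−1−K, d−i)) · C(n−1, m−1) · (n−m−d)!/(d!)^{m−1}. -/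
open Finset

section aux
variable {n m d : ℕ} {F : Finset (Sym2 (Fin n))} {C : Finset (Fin n)} {L : Fin n → Finset (Fin n)}

lemma sf_edge_mem (h : IsStarFactorOn m d F C L) (a b : Fin n) :
    s(a, b) ∈ F ↔ ∃ c ∈ C, ∃ v ∈ L c, (a = c ∧ b = v) ∨ (a = v ∧ b = c) := by
  obtain ⟨-, -, -, -, hFeq⟩ := h
  rw [hFeq]
  simp [Sym2.eq_iff, eq_comm]

lemma sf_blocks_disj (h : IsStarFactorOn m d F C L) {c c' x : Fin n} (hc : c ∈ C) (hc' : c' ∈ C)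
    (hne : c ≠ c') (h1 : x ∈ insert c (L c)) (h2 : x ∈ insert c' (L c')) : False :=
  Finset.disjoint_left.1 (h.2.2.1 c hc c' hc' hne) h1 h2

lemma sf_leaf_center_eq (h : IsStarFactorOn m d F C L) {c c' x : Fin n} (hc : c ∈ C)
    (hc' : c' ∈ C) (h1 : x ∈ L c) (h2 : x ∈ L c') : c = c' := by
  by_contra hne
  exact sf_blocks_disj h hc hc' hne (mem_insert_of_mem h1) (mem_insert_of_mem h2)

lemma sf_center_not_leaf (h : IsStarFactorOn m d F C L) {c c' : Fin n} (hc : c ∈ C)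
    (hc' : c' ∈ C) (h1 : c ∈ L c') : False := by
  rcases eq_or_ne c c' with rfl | hne
  · exact (h.2.1 c hc).1 h1
  · exact sf_blocks_disj h hc hc' hne (mem_insert_self _ _) (mem_insert_of_mem h1)

lemma sf_nbhd (h : IsStarFactorOn m d F C L) {z : Fin n} (hz : z ∈ C) (v : Fin n) :
    s(z, v) ∈ F ↔ v ∈ L z := by
  rw [sf_edge_mem h]
  constructor
  · rintro ⟨c, hc, w, hw, ⟨rfl, rfl⟩ | ⟨rfl, rfl⟩⟩
    · exact hw
    · exact absurd hw (fun hw => sf_center_not_leaf h hz hc hw)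
  · exact fun hv => ⟨z, hz, v, hv, Or.inl ⟨rfl, rfl⟩⟩

lemma sf_leaf_unique (h : IsStarFactorOn m d F C L) {z : Fin n} (hz : z ∈ C)
    {L1 : Finset (Fin n)} (h2 : L1.card = d)
    (h3 : L1.image (fun v => s(z, v)) ⊆ F) : L1 = L z := by
  apply Finset.eq_of_subset_of_card_le
  · intro v hv
    exact (sf_nbhd h hz v).1 (h3 (mem_image_of_mem _ hv))
  · rw [h2, (h.2.1 z hz).2]

lemma sf_normalize (hd : 0 < d) (hF : IsStarFactor m d F) (z : Fin n)
    {L1 : Finset (Fin n)} (h1 : z ∉ L1) (h2 : L1.card = d)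
    (h3 : L1.image (fun v => s(z, v)) ⊆ F) :
    ∃ p : Finset (Fin n) × (Fin n → Finset (Fin n)),
      IsStarFactorOn m d F p.1 p.2 ∧ z ∈ p.1 := by
  classical
  obtain ⟨C, L, h⟩ := hF
  by_cases hz : z ∈ C
  · exact ⟨(C, L), h, hz⟩
  -- z is not a center; then d = 1 and z is a leaf of a unique center c
  have hkey : ∀ v ∈ L1, v ∈ C ∧ z ∈ L v := by
    intro v hv
    have := h3 (mem_image_of_mem _ hv)
    rw [sf_edge_mem h] at this
    obtain ⟨c, hc, w, hw, ⟨rfl, rfl⟩ | ⟨rfl, rfl⟩⟩ := this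
    · exact absurd hc hz
    · exact ⟨hc, hw⟩
  obtain ⟨c, hc⟩ := Finset.card_pos.1 (h2 ▸ hd)
  obtain ⟨hcC, hzc⟩ := hkey c hc
  have hL1 : L1 = {c} := by
    apply Finset.eq_singleton_iff_unique_mem.2 ⟨hc, fun v hv => ?_⟩
    obtain ⟨hvC, hzv⟩ := hkey v hv
    exact sf_leaf_center_eq h hvC hcC hzv hzc
  have hd1 : d = 1 := by rw [← h2, hL1, card_singleton]
  have hLc : L c = {z} := by
    have hcard : (L c).card = 1 := hd1 ▸ (h.2.1 c hcC).2
    obtain ⟨w, hw⟩ := Finset.card_eq_one.1 hcard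
    rw [hw] at hzc ⊢
    rw [mem_singleton] at hzc
    rw [hzc]
  have hcne : c ≠ z := by rintro rfl; exact hz hcC
  obtain ⟨hCm, hld, hdisj, hcover, hFeq⟩ := h
  have hm0 : 0 < m := hCm ▸ card_pos.2 ⟨c, hcC⟩
  set C1 : Finset (Fin n) := insert z (C.erase c) with hC1
  set LL : Fin n → Finset (Fin n) := Function.update L z {c} with hLL
  have hblk : ∀ x ∈ C.erase c, LL x = L x := by
    intro x hx
    have hxz : x ≠ z := by rintro rfl; exact hz (mem_of_mem_erase hx)
    exact Function.update_of_ne hxz _ _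
  have hLLz : LL z = {c} := Function.update_self _ _ _
  have hznotin : z ∉ C.erase c := fun hh => hz (mem_of_mem_erase hh)
  have hblkz : insert z (LL z) = insert c (L c) := by
    rw [hLLz, hLc]
    ext x; simp [or_comm]
  have hCsplit : C = insert c (C.erase c) := (Finset.insert_erase hcC).symm
  have hcne' : c ∉ C.erase c := notMem_erase _ _
  have hsf : IsStarFactorOn m d F C1 LL := by
    refine ⟨?_, ?_, ?_, ?_, ?_⟩
    · rw [hC1, card_insert_of_notMem hznotin, card_erase_of_mem hcC, hCm]
      omega
    · intro x hx
      rcases mem_insert.1 hx with hxz | hx'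
      · subst hxz
        constructor
        · rw [hLLz, mem_singleton]; exact fun hh => hcne (hh.symm)
        · rw [hLLz, card_singleton, hd1]
      · rw [hblk x hx']
        exact hld x (mem_of_mem_erase hx')
    · intro x hx y hy hxy
      rcases mem_insert.1 hx with hxz | hx' <;> rcases mem_insert.1 hy with hyz | hy'
      · exact absurd (hxz.trans hyz.symm) hxy
      · subst hxz
        rw [hblkz, hblk y hy']
        exact hdisj c hcC y (mem_of_mem_erase hy') (by rintro rfl; exact hcne' hy')
      · subst hyz
        rw [hblkz, hblk x hx']
        exact hdisj x (mem_of_mem_erase hx') c hcC (by rintro rfl; exact hcne' hx')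
      · rw [hblk x hx', hblk y hy']
        exact hdisj x (mem_of_mem_erase hx') y (mem_of_mem_erase hy') hxy
    · have e1 : (C.erase c).biUnion (fun x => insert x (LL x))
          = (C.erase c).biUnion (fun x => insert x (L x)) :=
        biUnion_congr rfl (fun x hx => by rw [hblk x hx])
      have e2 : C.biUnion (fun x => insert x (L x))
          = insert c (L c) ∪ (C.erase c).biUnion (fun x => insert x (L x)) := by
        conv_lhs => rw [hCsplit]
        rw [biUnion_insert]
      rw [hC1, biUnion_insert, hblkz, e1, ← e2, hcover]
    · have e1 : (C.erase c).biUnion (fun x => (LL x).image (fun v => s(x, v)))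
          = (C.erase c).biUnion (fun x => (L x).image (fun v => s(x, v))) :=
        biUnion_congr rfl (fun x hx => by rw [hblk x hx])
      have hz_edges : Finset.image (fun v => s(z, v)) (LL z)
          = Finset.image (fun v => s(c, v)) (L c) := by
        rw [hLLz, hLc]
        simp [Sym2.eq_swap]
      have e3 : C.biUnion (fun x => (L x).image (fun v => s(x, v)))
          = (L c).image (fun v => s(c, v))
            ∪ (C.erase c).biUnion (fun x => (L x).image (fun v => s(x, v))) := by
        conv_lhs => rw [hCsplit]
        rw [biUnion_insert]
      rw [hFeq, hC1, biUnion_insert, hz_edges, e1, e3]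
  exact ⟨(C1, LL), hsf, mem_insert_self _ _⟩

end aux

open Classical in
noncomputable def sfDecomp (m d : ℕ) {n : ℕ} (z : Fin n) (F : Finset (Sym2 (Fin n))) :
    Finset (Fin n) × (Fin n → Finset (Fin n)) :=
  if h : ∃ p : Finset (Fin n) × (Fin n → Finset (Fin n)),
      IsStarFactorOn m d F p.1 p.2 ∧ z ∈ p.1 then h.choose else (∅, fun _ => ∅)

open Classical in
lemma sfDecomp_spec {m d n : ℕ} (z : Fin n) (F : Finset (Sym2 (Fin n)))
    (h : ∃ p : Finset (Fin n) × (Fin n → Finset (Fin n)),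
      IsStarFactorOn m d F p.1 p.2 ∧ z ∈ p.1) :
    IsStarFactorOn m d F (sfDecomp m d z F).1 (sfDecomp m d z F).2 ∧
      z ∈ (sfDecomp m d z F).1 := by
  simp only [sfDecomp, dif_pos h]
  exact h.choose_spec

/-- The encoding map used in the double counting argument. -/
noncomputable def sfEnc (m d : ℕ) {n : ℕ} (z : Fin n)
    (x : Finset (Sym2 (Fin n)) × (Fin (m - 1) → Equiv.Perm (Fin d))) :
    Finset (Fin n) × Finset (Fin n) × (Fin (m - 1) × Fin d → Fin n) :=
  ((sfDecomp m d z x.1).2 z, (sfDecomp m d z x.1).1.erase z,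
    fun p => (((sfDecomp m d z x.1).2
        ((((sfDecomp m d z x.1).1.erase z).sort (· ≤ ·)).getD p.1.1 z)).sort (· ≤ ·)).getD
      (x.2 p.1 p.2).1 z)

lemma sfEnc_c1 {m d n : ℕ} (z : Fin n)
    (x : Finset (Sym2 (Fin n)) × (Fin (m - 1) → Equiv.Perm (Fin d))) :
    (sfEnc m d z x).1 = (sfDecomp m d z x.1).2 z := rfl

lemma sfEnc_c2 {m d n : ℕ} (z : Fin n)
    (x : Finset (Sym2 (Fin n)) × (Fin (m - 1) → Equiv.Perm (Fin d))) :
    (sfEnc m d z x).2.1 = (sfDecomp m d z x.1).1.erase z := rfl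

section encfacts

variable {n m d : ℕ} {F : Finset (Sym2 (Fin n))} {C : Finset (Fin n)}
  {L : Fin n → Finset (Fin n)} {z : Fin n}

/-- The center picked for index `q`. -/
noncomputable def ctr (C : Finset (Fin n)) (z : Fin n) (q : ℕ) : Fin n :=
  ((C.erase z).sort (· ≤ ·)).getD q z

lemma ctr_lt (hSF : IsStarFactorOn m d F C L) (hz : z ∈ C) (q : Fin (m - 1)) :
    q.1 < ((C.erase z).sort (· ≤ ·)).length := by
  rw [Finset.length_sort, card_erase_of_mem hz, hSF.1]
  exact q.2

lemma ctr_mem (hSF : IsStarFactorOn m d F C L) (hz : z ∈ C) (q : Fin (m - 1)) :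
    ctr C z q.1 ∈ C.erase z := by
  rw [ctr, List.getD_eq_getElem _ _ (ctr_lt hSF hz q)]
  exact (Finset.mem_sort _).1 (List.getElem_mem _)

lemma ctr_inj (hSF : IsStarFactorOn m d F C L) (hz : z ∈ C) {q q' : Fin (m - 1)}
    (h : ctr C z q.1 = ctr C z q'.1) : q = q' := by
  rw [ctr, ctr, List.getD_eq_getElem _ _ (ctr_lt hSF hz q),
    List.getD_eq_getElem _ _ (ctr_lt hSF hz q')] at h
  exact Fin.ext ((List.Nodup.getElem_inj_iff (Finset.sort_nodup _ _)).1 h)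

lemma ctr_surj (hSF : IsStarFactorOn m d F C L) (hz : z ∈ C) {c : Fin n}
    (hc : c ∈ C.erase z) : ∃ q : Fin (m - 1), ctr C z q.1 = c := by
  have hmem : c ∈ (C.erase z).sort (· ≤ ·) := (Finset.mem_sort _).2 hc
  obtain ⟨i, hi, hieq⟩ := List.mem_iff_getElem.1 hmem
  have hi' : i < m - 1 := by
    rwa [Finset.length_sort, card_erase_of_mem hz, hSF.1] at hi
  exact ⟨⟨i, hi'⟩, by rw [ctr, List.getD_eq_getElem _ _ hi]; exact hieq⟩

/-- The leaf picked for index `(q, r)` and permutation family `π`. -/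
noncomputable def lf (C : Finset (Fin n)) (L : Fin n → Finset (Fin n)) (z : Fin n)
    (q r : ℕ) : Fin n :=
  ((L (ctr C z q)).sort (· ≤ ·)).getD r z

lemma lf_lt (hSF : IsStarFactorOn m d F C L) (hz : z ∈ C) (q : Fin (m - 1)) (r : Fin d) :
    r.1 < ((L (ctr C z q.1)).sort (· ≤ ·)).length := by
  rw [Finset.length_sort,
    (hSF.2.1 _ (mem_of_mem_erase (ctr_mem hSF hz q))).2]
  exact r.2

lemma lf_mem (hSF : IsStarFactorOn m d F C L) (hz : z ∈ C) (q : Fin (m - 1)) (r : Fin d) :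
    lf C L z q.1 r.1 ∈ L (ctr C z q.1) := by
  rw [lf, List.getD_eq_getElem _ _ (lf_lt hSF hz q r)]
  exact (Finset.mem_sort _).1 (List.getElem_mem _)

lemma lf_inj (hSF : IsStarFactorOn m d F C L) (hz : z ∈ C) (q : Fin (m - 1)) {r r' : Fin d}
    (h : lf C L z q.1 r.1 = lf C L z q.1 r'.1) : r = r' := by
  rw [lf, lf, List.getD_eq_getElem _ _ (lf_lt hSF hz q r),
    List.getD_eq_getElem _ _ (lf_lt hSF hz q r')] at h
  exact Fin.ext ((List.Nodup.getElem_inj_iff (Finset.sort_nodup _ _)).1 h)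

lemma lf_image (hSF : IsStarFactorOn m d F C L) (hz : z ∈ C) (q : Fin (m - 1))
    (π : Equiv.Perm (Fin d)) :
    (univ : Finset (Fin d)).image (fun r => lf C L z q.1 (π r).1) = L (ctr C z q.1) := by
  apply Finset.eq_of_subset_of_card_le
  · intro v hv
    obtain ⟨r, -, rfl⟩ := Finset.mem_image.1 hv
    exact lf_mem hSF hz q (π r)
  · rw [(hSF.2.1 _ (mem_of_mem_erase (ctr_mem hSF hz q))).2]
    rw [Finset.card_image_of_injective _ (fun r r' h => π.injective (lf_inj hSF hz q h)),
      card_univ, Fintype.card_fin]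

lemma sfEnc_c3 {m d n : ℕ} (z : Fin n)
    (x : Finset (Sym2 (Fin n)) × (Fin (m - 1) → Equiv.Perm (Fin d)))
    (p : Fin (m - 1) × Fin d) :
    (sfEnc m d z x).2.2 p
      = lf (sfDecomp m d z x.1).1 (sfDecomp m d z x.1).2 z p.1.1 (x.2 p.1 p.2).1 := by
  simp only [sfEnc, lf, ctr]

lemma ctr_congr {C C' : Finset (Fin n)} {z : Fin n} (h : C.erase z = C'.erase z) (q : ℕ) :
    ctr C z q = ctr C' z q := by rw [ctr, ctr, h]

end encfacts

attribute [irreducible] sfDecomp sfEnc lf ctr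

section encmain

variable {n m d : ℕ}

lemma sfEnc_fst (z : Fin n) (x : Finset (Sym2 (Fin n)) × (Fin (m - 1) → Equiv.Perm (Fin d)))
    (hx : ∃ p : Finset (Fin n) × (Fin n → Finset (Fin n)),
      IsStarFactorOn m d x.1 p.1 p.2 ∧ z ∈ p.1)
    {L1 : Finset (Fin n)} (h2 : L1.card = d) (h3 : L1.image (fun v => s(z, v)) ⊆ x.1) :
    (sfEnc m d z x).1 = L1 := by
  obtain ⟨hSF, hz⟩ := sfDecomp_spec z x.1 hx
  rw [sfEnc_c1]
  exact (sf_leaf_unique hSF hz h2 h3).symm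

lemma sfEnc_props (z : Fin n) (x : Finset (Sym2 (Fin n)) × (Fin (m - 1) → Equiv.Perm (Fin d)))
    (hx : ∃ p : Finset (Fin n) × (Fin n → Finset (Fin n)),
      IsStarFactorOn m d x.1 p.1 p.2 ∧ z ∈ p.1) :
    (sfEnc m d z x).1 ⊆ univ.erase z ∧ (sfEnc m d z x).1.card = d ∧
    (sfEnc m d z x).2.1 ⊆ univ.erase z ∧ (sfEnc m d z x).2.1.card = m - 1 ∧
    Disjoint (sfEnc m d z x).1 (sfEnc m d z x).2.1 ∧
    Function.Injective (sfEnc m d z x).2.2 ∧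
    ∀ p, (sfEnc m d z x).2.2 p ∉ insert z ((sfEnc m d z x).1 ∪ (sfEnc m d z x).2.1) := by
  obtain ⟨hSF, hz⟩ := sfDecomp_spec z x.1 hx
  set C := (sfDecomp m d z x.1).1 with hC
  set L := (sfDecomp m d z x.1).2 with hL
  have henc1 : (sfEnc m d z x).1 = L z := sfEnc_c1 z x
  have henc2 : (sfEnc m d z x).2.1 = C.erase z := sfEnc_c2 z x
  have hencσ : ∀ p : Fin (m - 1) × Fin d,
      (sfEnc m d z x).2.2 p = lf C L z p.1.1 (x.2 p.1 p.2).1 := fun p => sfEnc_c3 z x p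
  have hσmem : ∀ p : Fin (m - 1) × Fin d,
      (sfEnc m d z x).2.2 p ∈ L (ctr C z p.1.1) := by
    intro p
    rw [hencσ]
    exact lf_mem hSF hz p.1 (x.2 p.1 p.2)
  refine ⟨?_, ?_, ?_, ?_, ?_, ?_, ?_⟩
  · rw [henc1]
    intro v hv
    rw [mem_erase]
    exact ⟨fun hvz => (hSF.2.1 z hz).1 (hvz ▸ hv), mem_univ v⟩
  · rw [henc1]; exact (hSF.2.1 z hz).2
  · rw [henc2]
    intro v hv
    rw [mem_erase]
    exact ⟨(mem_erase.1 hv).1, mem_univ v⟩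
  · rw [henc2, card_erase_of_mem hz, hSF.1]
  · rw [henc1, henc2]
    rw [Finset.disjoint_left]
    intro v hv hv'
    exact sf_center_not_leaf hSF (mem_of_mem_erase hv') hz hv
  · intro p p' hpp
    have hc := hσmem p
    have hc' : (sfEnc m d z x).2.2 p ∈ L (ctr C z p'.1.1) := hpp ▸ hσmem p'
    have hcc : ctr C z p.1.1 = ctr C z p'.1.1 :=
      sf_leaf_center_eq hSF (mem_of_mem_erase (ctr_mem hSF hz p.1))
        (mem_of_mem_erase (ctr_mem hSF hz p'.1)) hc hc'
    have hq : p.1 = p'.1 := ctr_inj hSF hz hcc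
    rw [hencσ, hencσ, ← hq] at hpp
    have hr : x.2 p.1 p.2 = x.2 p.1 p'.2 := lf_inj hSF hz p.1 hpp
    have : p.2 = p'.2 := (x.2 p.1).injective hr
    exact Prod.ext hq this
  · intro p hp
    have hcmem := ctr_mem hSF hz p.1
    have hcC : ctr C z p.1.1 ∈ C := mem_of_mem_erase hcmem
    have hσ := hσmem p
    rw [henc1, henc2] at hp
    rcases mem_insert.1 hp with heq | hmem
    · rw [heq] at hσ
      exact sf_center_not_leaf hSF hz hcC hσ
    · rcases mem_union.1 hmem with h' | h'
      · exact (mem_erase.1 hcmem).1 (sf_leaf_center_eq hSF hcC hz hσ h')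
      · exact sf_center_not_leaf hSF (mem_of_mem_erase h') hcC hσ

lemma sfEnc_inj (z : Fin n)
    {x y : Finset (Sym2 (Fin n)) × (Fin (m - 1) → Equiv.Perm (Fin d))}
    (hx : ∃ p : Finset (Fin n) × (Fin n → Finset (Fin n)),
      IsStarFactorOn m d x.1 p.1 p.2 ∧ z ∈ p.1)
    (hy : ∃ p : Finset (Fin n) × (Fin n → Finset (Fin n)),
      IsStarFactorOn m d y.1 p.1 p.2 ∧ z ∈ p.1)
    (h : sfEnc m d z x = sfEnc m d z y) : x = y := by
  obtain ⟨hSFx, hzx⟩ := sfDecomp_spec z x.1 hx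
  obtain ⟨hSFy, hzy⟩ := sfDecomp_spec z y.1 hy
  set Cx := (sfDecomp m d z x.1).1 with hCx
  set Lx := (sfDecomp m d z x.1).2 with hLx
  set Cy := (sfDecomp m d z y.1).1 with hCy
  set Ly := (sfDecomp m d z y.1).2 with hLy
  have h1 : Lx z = Ly z := by
    rw [hLx, hLy, ← sfEnc_c1 z x, ← sfEnc_c1 z y, h]
  have h2 : Cx.erase z = Cy.erase z := by
    rw [hCx, hCy, ← sfEnc_c2 z x, ← sfEnc_c2 z y, h]
  have h3 : ∀ p : Fin (m - 1) × Fin d,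
      lf Cx Lx z p.1.1 (x.2 p.1 p.2).1 = lf Cy Ly z p.1.1 (y.2 p.1 p.2).1 := by
    intro p
    rw [hCx, hCy, hLx, hLy, ← sfEnc_c3 z x p, ← sfEnc_c3 z y p, h]
  have hctr : ∀ q : ℕ, ctr Cx z q = ctr Cy z q := fun q => ctr_congr h2 q
  have hstepA : ∀ c ∈ Cx.erase z, Lx c = Ly c := by
    intro c hc
    obtain ⟨q, rfl⟩ := ctr_surj hSFx hzx hc
    calc Lx (ctr Cx z q.1)
        = (univ : Finset (Fin d)).image (fun r => lf Cx Lx z q.1 ((x.2 q) r).1) :=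
          (lf_image hSFx hzx q (x.2 q)).symm
      _ = (univ : Finset (Fin d)).image (fun r => lf Cy Ly z q.1 ((y.2 q) r).1) :=
          Finset.image_congr (fun r _ => h3 (q, r))
      _ = Ly (ctr Cy z q.1) := lf_image hSFy hzy q (y.2 q)
      _ = Ly (ctr Cx z q.1) := by rw [hctr q.1]
  have hB : x.1 = y.1 := by
    have ex : x.1 = (Lx z).image (fun v => s(z, v))
        ∪ (Cx.erase z).biUnion (fun c => (Lx c).image (fun v => s(c, v))) := by
      have := hSFx.2.2.2.2
      rw [this]
      conv_lhs => rw [← Finset.insert_erase hzx]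
      rw [biUnion_insert]
    have ey : y.1 = (Ly z).image (fun v => s(z, v))
        ∪ (Cy.erase z).biUnion (fun c => (Ly c).image (fun v => s(c, v))) := by
      have := hSFy.2.2.2.2
      rw [this]
      conv_lhs => rw [← Finset.insert_erase hzy]
      rw [biUnion_insert]
    rw [ex, ey, h1, ← h2]
    congr 1
    exact biUnion_congr rfl (fun c hc => by rw [hstepA c hc])
  have hdec : sfDecomp m d z x.1 = sfDecomp m d z y.1 := by rw [hB]
  have hCeq : Cx = Cy := by rw [hCx, hCy, hdec]
  have hLeq : Lx = Ly := by rw [hLx, hLy, hdec]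
  have hπ : x.2 = y.2 := by
    funext q
    apply Equiv.ext
    intro r
    have := h3 (q, r)
    rw [← hCeq, ← hLeq] at this
    exact lf_inj hSFx hzx q this
  exact Prod.ext hB hπ

end encmain

lemma Lgood_card_le {n : ℕ} (z : Fin n) (W : Finset (Fin n)) (hzW : z ∉ W) (d m : ℕ) :
    (((((univ : Finset (Fin n)).erase z).powersetCard d).filter
      (fun L => (L ∩ W).card ≤ m)).card)
      ≤ ∑ i ∈ Finset.range (m + 1), (W.card.choose i) * ((n - 1 - W.card).choose (d - i)) := by
  classical
  set U := (univ : Finset (Fin n)).erase z with hUdef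
  have hW_sub : W ⊆ U := fun w hw => mem_erase.2 ⟨fun h => hzW (h ▸ hw), mem_univ w⟩
  have hU : U.card = n - 1 := by
    rw [hUdef, card_erase_of_mem (mem_univ z), card_univ, Fintype.card_fin]
  have hUW : (U \ W).card = n - 1 - W.card := by rw [card_sdiff_of_subset hW_sub, hU]
  rw [Finset.card_eq_sum_card_fiberwise (f := fun L => (L ∩ W).card)
    (t := Finset.range (m + 1))
    (fun L hL => mem_range.2 (Nat.lt_succ_of_le (mem_filter.1 hL).2))]
  apply Finset.sum_le_sum
  intro i _
  have hinj : ((((U.powersetCard d).filter (fun L => (L ∩ W).card ≤ m)).filter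
      (fun L => (L ∩ W).card = i)).card)
      ≤ ((W.powersetCard i) ×ˢ ((U \ W).powersetCard (d - i))).card := by
    apply Finset.card_le_card_of_injOn (fun L => (L ∩ W, L \ W))
    · intro L hL
      obtain ⟨hL1, hLi⟩ := mem_filter.1 hL
      obtain ⟨hLp, -⟩ := mem_filter.1 hL1
      obtain ⟨hLsub, hLcard⟩ := mem_powersetCard.1 hLp
      have hsplit := Finset.card_inter_add_card_sdiff L W
      rw [mem_coe, mem_product]
      constructor
      · exact mem_powersetCard.2 ⟨inter_subset_right, hLi⟩
      · refine mem_powersetCard.2 ⟨?_, ?_⟩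
        · exact fun v hv => mem_sdiff.2 ⟨hLsub (mem_sdiff.1 hv).1, (mem_sdiff.1 hv).2⟩
        · show (L \ W).card = d - i
          omega
    · intro L _ L' _ hLL
      have h1 : L ∩ W = L' ∩ W := congrArg Prod.fst hLL
      have h2 : L \ W = L' \ W := congrArg Prod.snd hLL
      rw [← Finset.sdiff_union_inter L W, ← Finset.sdiff_union_inter L' W, h1, h2]
  refine le_trans hinj ?_
  rw [card_product, Finset.card_powersetCard, Finset.card_powersetCard, hUW]

lemma card_inj_fun_le {α β : Type*} [Fintype α] [Fintype β]
    (V : Finset β)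
    [Fintype {σ : α → β // Function.Injective σ ∧ ∀ a, σ a ∈ V}] :
    Fintype.card {σ : α → β // Function.Injective σ ∧ ∀ a, σ a ∈ V}
      ≤ V.card.descFactorial (Fintype.card α) := by
  classical
  calc Fintype.card {σ : α → β // Function.Injective σ ∧ ∀ a, σ a ∈ V}
      ≤ Fintype.card (α ↪ {v // v ∈ V}) := by
        apply Fintype.card_le_of_injective
          (fun σ => (⟨fun a => ⟨σ.1 a, σ.2.2 a⟩,
            fun a a' h => σ.2.1 (congrArg Subtype.val h)⟩ : α ↪ {v // v ∈ V}))
        intro σ τ h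
        apply Subtype.ext
        funext a
        exact congrArg Subtype.val (DFunLike.congr_fun h a)
    _ = (Fintype.card {v // v ∈ V}).descFactorial (Fintype.card α) := Fintype.card_embedding_eq
    _ = V.card.descFactorial (Fintype.card α) := by rw [Fintype.card_coe]

open Classical in
lemma main_nat (m d : ℕ) (hm : 0 < m) (hd : 0 < d) (n : ℕ) (hn : n = (d + 1) * m)
    (z : Fin n) (W : Finset (Fin n)) (hzW : z ∉ W) :
    ((univ : Finset (Finset (Sym2 (Fin n)))).filter (fun F => IsStarFactor m d F ∧
      ∃ L : Finset (Fin n), z ∉ L ∧ L.card = d ∧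
        L.image (fun v => s(z, v)) ⊆ F ∧ (L ∩ W).card ≤ m)).card * (d.factorial) ^ (m - 1)
    ≤ (∑ i ∈ Finset.range (m + 1), (W.card.choose i) * ((n - 1 - W.card).choose (d - i)))
        * ((n - 1).choose (m - 1)) * (n - m - d).factorial := by
  classical
  have hn2 : n = m * d + m := by rw [hn]; ring
  have hmd : (m - 1) * d = n - m - d := by
    rw [Nat.sub_mul]
    omega
  set 𝒮 : Finset (Finset (Sym2 (Fin n))) :=
    (univ : Finset (Finset (Sym2 (Fin n)))).filter (fun F => IsStarFactor m d F ∧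
      ∃ L : Finset (Fin n), z ∉ L ∧ L.card = d ∧
        L.image (fun v => s(z, v)) ⊆ F ∧ (L ∩ W).card ≤ m) with h𝒮
  set T : Finset (Finset (Fin n) × Finset (Fin n) × (Fin (m - 1) × Fin d → Fin n)) :=
    (univ : Finset (Finset (Fin n) × Finset (Fin n) × (Fin (m - 1) × Fin d → Fin n))).filter
      (fun x => x.1 ⊆ univ.erase z ∧ x.1.card = d ∧ (x.1 ∩ W).card ≤ m ∧
        x.2.1 ⊆ univ.erase z ∧ x.2.1.card = m - 1 ∧ Disjoint x.1 x.2.1 ∧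
        Function.Injective x.2.2 ∧
        ∀ p, x.2.2 p ∉ insert z (x.1 ∪ x.2.1)) with hT
  have hQ : ∀ x : Finset (Sym2 (Fin n)) × (Fin (m - 1) → Equiv.Perm (Fin d)), x.1 ∈ 𝒮 →
      ∃ p : Finset (Fin n) × (Fin n → Finset (Fin n)),
        IsStarFactorOn m d x.1 p.1 p.2 ∧ z ∈ p.1 := by
    intro x hx
    obtain ⟨-, hSF', L1, hL1a, hL1b, hL1c, -⟩ := mem_filter.1 hx
    exact sf_normalize hd hSF' z hL1a hL1b hL1c
  -- Step 1 : injection into T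
  have hstep1 : 𝒮.card * d.factorial ^ (m - 1) ≤ T.card := by
    have hD : (𝒮 ×ˢ (univ : Finset (Fin (m - 1) → Equiv.Perm (Fin d)))).card
        = 𝒮.card * d.factorial ^ (m - 1) := by
      rw [card_product, card_univ, Fintype.card_fun, Fintype.card_perm, Fintype.card_fin,
        Fintype.card_fin]
    rw [← hD]
    apply Finset.card_le_card_of_injOn (sfEnc m d z)
    · intro x hx
      have hx1 : x.1 ∈ 𝒮 := (mem_product.1 hx).1
      have hQx := hQ x hx1
      obtain ⟨p1, p2, p3, p4, p5, p6, p7⟩ := sfEnc_props z x hQx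
      have hW' : ((sfEnc m d z x).1 ∩ W).card ≤ m := by
        obtain ⟨-, -, L1, hL1a, hL1b, hL1c, hL1d⟩ := mem_filter.1 hx1
        rw [sfEnc_fst z x hQx hL1b hL1c]
        exact hL1d
      exact mem_filter.2 ⟨mem_univ _, p1, p2, hW', p3, p4, p5, p6, p7⟩
    · intro x hx y hy h
      exact sfEnc_inj z (hQ x (mem_product.1 hx).1) (hQ y (mem_product.1 hy).1) h
  -- Step 2 : counting T by fibers over (first two components)
  have hstep2 : T.card ≤ (n - m - d).factorial *
      ((((univ : Finset (Fin n)).erase z).powersetCard d).filter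
          (fun L => (L ∩ W).card ≤ m)).card * ((n - 1).choose (m - 1)) := by
    have hfib := Finset.card_le_mul_card_image (f := fun x => (x.1, x.2.1)) T
      ((n - m - d).factorial) ?fib
    case fib =>
      intro a ha
      obtain ⟨x₀, hx₀, hfx₀⟩ := Finset.mem_image.1 ha
      obtain ⟨-, q1, q2, q3, q4, q5, q6, -, -⟩ := mem_filter.1 hx₀
      have ha1 : a.1 = x₀.1 := by rw [← hfx₀]
      have ha2 : a.2 = x₀.2.1 := by rw [← hfx₀]
      set V : Finset (Fin n) := univ \ insert z (a.1 ∪ a.2) with hV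
      have hzout : z ∉ a.1 ∪ a.2 := by
        rw [mem_union, ha1, ha2]
        rintro (hc | hc)
        · exact (notMem_erase z univ) (q1 hc)
        · exact (notMem_erase z univ) (q4 hc)
      have hVcard : V.card = n - m - d := by
        rw [hV, card_sdiff_of_subset (subset_univ _), card_insert_of_notMem hzout,
          card_union_of_disjoint (by rw [ha1, ha2]; exact q6), card_univ, Fintype.card_fin,
          ha1, ha2, q2, q5]
        omega
      -- fiber injects into injective functions landing in V
      have hinj2 : (T.filter (fun x => (x.1, x.2.1) = a)).card
          ≤ ((univ : Finset (Fin (m - 1) × Fin d → Fin n)).filter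
              (fun σ => Function.Injective σ ∧ ∀ p, σ p ∈ V)).card := by
        apply Finset.card_le_card_of_injOn (fun x => x.2.2)
        · intro x hx
          obtain ⟨hxT, hxa⟩ := mem_filter.1 hx
          obtain ⟨-, -, -, -, -, -, -, r7, r8⟩ := mem_filter.1 hxT
          refine mem_filter.2 ⟨mem_univ _, r7, fun p => ?_⟩
          rw [hV, mem_sdiff]
          refine ⟨mem_univ _, ?_⟩
          have hx1 : x.1 = a.1 := by rw [← hxa]
          have hx2 : x.2.1 = a.2 := by rw [← hxa]
          rw [← hx1, ← hx2]
          exact r8 p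
        · intro x hx y hy hxy
          have hxa : (x.1, x.2.1) = a := (mem_filter.1 hx).2
          have hya : (y.1, y.2.1) = a := (mem_filter.1 hy).2
          have h12 := hxa.trans hya.symm
          have h1 : x.1 = y.1 :=
            congrArg (fun t : Finset (Fin n) × Finset (Fin n) => t.1) h12
          have h2 : x.2.1 = y.2.1 :=
            congrArg (fun t : Finset (Fin n) × Finset (Fin n) => t.2) h12
          exact Prod.ext h1 (Prod.ext h2 hxy)
      refine hinj2.trans ?_
      have hcalc : ((univ : Finset (Fin (m - 1) × Fin d → Fin n)).filter
              (fun σ => Function.Injective σ ∧ ∀ p, σ p ∈ V)).card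
          = Fintype.card {σ : Fin (m - 1) × Fin d → Fin n //
              Function.Injective σ ∧ ∀ p, σ p ∈ V} := (Fintype.card_subtype _).symm
      rw [hcalc]
      refine (card_inj_fun_le V).trans ?_
      rw [hVcard, Fintype.card_prod, Fintype.card_fin, Fintype.card_fin, hmd,
        Nat.descFactorial_self]
    refine hfib.trans ?_
    rw [Nat.mul_assoc]
    apply Nat.mul_le_mul_left
    have himg : T.image (fun x => (x.1, x.2.1)) ⊆
        ((((univ : Finset (Fin n)).erase z).powersetCard d).filter
          (fun L => (L ∩ W).card ≤ m)) ×ˢ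
        (((univ : Finset (Fin n)).erase z).powersetCard (m - 1)) := by
      intro a ha
      obtain ⟨x₀, hx₀, hfx₀⟩ := Finset.mem_image.1 ha
      obtain ⟨-, q1, q2, q3, q4, q5, -, -, -⟩ := mem_filter.1 hx₀
      have ha1 : a.1 = x₀.1 := by rw [← hfx₀]
      have ha2 : a.2 = x₀.2.1 := by rw [← hfx₀]
      rw [mem_product, ha1, ha2]
      exact ⟨mem_filter.2 ⟨mem_powersetCard.2 ⟨q1, q2⟩, q3⟩, mem_powersetCard.2 ⟨q4, q5⟩⟩
    refine (Finset.card_le_card himg).trans ?_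
    rw [card_product, Finset.card_powersetCard, card_erase_of_mem (mem_univ z), card_univ,
      Fintype.card_fin]
  -- Step 3 : combine
  have hstep3 := Lgood_card_le z W hzW d m
  calc 𝒮.card * d.factorial ^ (m - 1) ≤ T.card := hstep1
    _ ≤ (n - m - d).factorial *
        ((((univ : Finset (Fin n)).erase z).powersetCard d).filter
          (fun L => (L ∩ W).card ≤ m)).card * ((n - 1).choose (m - 1)) := hstep2
    _ ≤ (n - m - d).factorial *
        (∑ i ∈ Finset.range (m + 1), (W.card.choose i) * ((n - 1 - W.card).choose (d - i)))
          * ((n - 1).choose (m - 1)) := by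
      apply Nat.mul_le_mul_right
      exact Nat.mul_le_mul_left _ hstep3
    _ = (∑ i ∈ Finset.range (m + 1), (W.card.choose i) * ((n - 1 - W.card).choose (d - i)))
        * ((n - 1).choose (m - 1)) * (n - m - d).factorial := by ring

/-- Let `m, d` be positive integers, `n = (d+1)·m`, `z ∈ [n]` a vertex and
`W ⊆ [n] \ {z}` a set of `K` vertices. The number of star factors of `K_n` containing a
`d`-star centered at `z` whose leaf set contains at most `m` elements of `W` is at most
`(Σ_{i=0}^m C(K,i)·C(n−1−K,d−i)) · C(n−1,m−1) · (n−m−d)!/(d!)^(m−1)`. -/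
theorem star_factors_with_restricted_star_bound (m d : ℕ) (hm : 0 < m) (hd : 0 < d)
    (n : ℕ) (hn : n = (d + 1) * m) (z : Fin n) (W : Finset (Fin n)) (hzW : z ∉ W)
    (K : ℕ) (hK : W.card = K) :
    (({F : Finset (Sym2 (Fin n)) | IsStarFactor m d F ∧
        ∃ L : Finset (Fin n), z ∉ L ∧ L.card = d ∧
          L.image (fun v => s(z, v)) ⊆ F ∧ (L ∩ W).card ≤ m}).ncard : ℝ) ≤
      (∑ i ∈ Finset.range (m + 1), ((K.choose i : ℝ) * ((n - 1 - K).choose (d - i) : ℝ))) *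
        ((n - 1).choose (m - 1) : ℝ) * (Nat.factorial (n - m - d) : ℝ) /
          ((Nat.factorial d : ℝ)) ^ (m - 1) := by
  classical
  have hseteq : ({F : Finset (Sym2 (Fin n)) | IsStarFactor m d F ∧
        ∃ L : Finset (Fin n), z ∉ L ∧ L.card = d ∧
          L.image (fun v => s(z, v)) ⊆ F ∧ (L ∩ W).card ≤ m} : Set (Finset (Sym2 (Fin n))))
      = ↑((univ : Finset (Finset (Sym2 (Fin n)))).filter (fun F => IsStarFactor m d F ∧
        ∃ L : Finset (Fin n), z ∉ L ∧ L.card = d ∧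
          L.image (fun v => s(z, v)) ⊆ F ∧ (L ∩ W).card ≤ m)) := by
    ext F
    simp
  rw [hseteq, Set.ncard_coe_finset]
  have hnat := main_nat m d hm hd n hn z W hzW
  rw [hK] at hnat
  have hpos : (0 : ℝ) < ((Nat.factorial d : ℝ)) ^ (m - 1) := by positivity
  rw [le_div_iff₀ hpos]
  exact_mod_cast hnat
end

section
/- Let m, d be positive integers and n = (d+1)·m. Every spanning star-tree T of K_n contains exactly one star factor of K_n, namely the edge set obtained from T by removing the m−1 path edges joining the star centers. -/
open Finset

lemma starFactorOn_card {n m d : ℕ} {F : Finset (Sym2 (Fin n))} {C : Finset (Fin n)}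
    {L : Fin n → Finset (Fin n)} (h : IsStarFactorOn m d F C L) : F.card = m * d := by
  obtain ⟨hC, hL, hdisj, _hcov, hF⟩ := h
  rw [hF, Finset.card_biUnion]
  · have : ∀ z ∈ C, ((L z).image (fun v => s(z, v))).card = d := by
      intro z hz
      rw [Finset.card_image_of_injOn, (hL z hz).2]
      intro a ha b hb hab
      rw [Sym2.eq_iff] at hab
      rcases hab with ⟨_, h2⟩ | ⟨h1, h2⟩
      · exact h2
      · rw [h2] at ha; exact absurd ha (hL z hz).1
    rw [Finset.sum_congr rfl this, Finset.sum_const, hC, smul_eq_mul]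
  · intro z hz z' hz' hne
    rw [Function.onFun, Finset.disjoint_left]
    rintro e he he'
    simp only [Finset.mem_image] at he he'
    obtain ⟨a, ha, rfl⟩ := he
    obtain ⟨b, hb, heq⟩ := he'
    have hd2 := hdisj z hz z' hz' hne
    rw [Sym2.eq_iff] at heq
    rcases heq with ⟨h1, h2⟩ | ⟨h1, h2⟩
    · exact hne h1.symm
    · exact Finset.disjoint_left.mp hd2 (Finset.mem_insert_self z (L z))
        (h2 ▸ Finset.mem_insert_of_mem hb)

lemma pathOn_mem {n : ℕ} {C : Finset (Fin n)} {P : Finset (Sym2 (Fin n))}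
    (h : IsPathOn C P) {e : Sym2 (Fin n)} (he : e ∈ P) {v : Fin n} (hv : v ∈ e) :
    v ∈ C := by
  obtain ⟨l, _, hlC, hP⟩ := h
  rw [hP] at he
  simp only [List.mem_toFinset, List.mem_map] at he
  obtain ⟨⟨a, b⟩, hab, rfl⟩ := he
  have ha : a ∈ l := (List.of_mem_zip hab).1
  have hb : b ∈ l := List.mem_of_mem_tail (List.of_mem_zip hab).2
  rw [Sym2.mem_iff] at hv
  rcases hv with rfl | rfl
  · rw [← hlC]; exact List.mem_toFinset.mpr ha
  · rw [← hlC]; exact List.mem_toFinset.mpr hb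

/-- Let `m, d` be positive integers and `n = (d+1)·m`. Every spanning
star-tree `T = F₀ ∪ P` of `K_n` (with `F₀` its star factor with center set `C` and `P` the
path edges joining the centers) contains exactly one star factor of `K_n`, namely the edge
set `T \ P` obtained from `T` by removing the path edges. -/
theorem spanning_star_tree_unique_star_factor (m d : ℕ) (hm : 0 < m) (hd : 0 < d)
    (n : ℕ) (hn : n = (d + 1) * m) (T F0 P : Finset (Sym2 (Fin n)))
    (C : Finset (Fin n)) (L : Fin n → Finset (Fin n))
    (hT : IsSpanningTree T) (hF0 : IsStarFactorOn m d F0 C L) (hP : IsPathOn C P)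
    (hFP : Disjoint F0 P) (hTFP : T = F0 ∪ P) :
    IsStarFactor m d (T \ P) ∧
    ∀ F : Finset (Sym2 (Fin n)), IsStarFactor m d F → F ⊆ T → F = T \ P := by

  have hTP : T \ P = F0 := by
    rw [hTFP, Finset.union_sdiff_cancel_right hFP]
  obtain ⟨hC, hL, hdisj, hcov, hF0eq⟩ := hF0
  -- leaves are not centers
  have hleaf_nC : ∀ z ∈ C, ∀ v ∈ L z, v ∉ C := by
    intro z hz v hv hvC
    by_cases hzv : z = v
    · exact (hL z hz).1 (hzv ▸ hv)
    · exact Finset.disjoint_left.mp (hdisj z hz v hvC hzv)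
        (Finset.mem_insert_of_mem hv) (Finset.mem_insert_self v (L v))
  constructor
  · rw [hTP]; exact ⟨C, L, hC, hL, hdisj, hcov, hF0eq⟩
  · intro F hF hFT
    obtain ⟨C', L', hC', hL', hdisj', hcov', hFeq⟩ := hF
    rw [hTP]
    -- F0 ⊆ F
    have hsub : F0 ⊆ F := by
      intro e he
      rw [hF0eq] at he
      simp only [Finset.mem_biUnion, Finset.mem_image] at he
      obtain ⟨z, hz, v, hv, rfl⟩ := he
      have hvnC : v ∉ C := hleaf_nC z hz v hv
      -- v is covered by F: some edge of F contains v
      have hvu : v ∈ C'.biUnion (fun z => insert z (L' z)) := hcov' ▸ Finset.mem_univ v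
      simp only [Finset.mem_biUnion, Finset.mem_insert] at hvu
      have key : ∀ e' ∈ F, v ∈ e' → s(z, v) ∈ F := by
        intro e' he'F hve'
        have he'T := hFT he'F
        rw [hTFP, Finset.mem_union] at he'T
        rcases he'T with he'F0 | he'P
        · rw [hF0eq] at he'F0
          simp only [Finset.mem_biUnion, Finset.mem_image] at he'F0
          obtain ⟨z3, hz3, w, hw, rfl⟩ := he'F0
          rw [Sym2.mem_iff] at hve'
          rcases hve' with rfl | rfl
          · exact absurd hz3 hvnC
          · have : z3 = z := by
              by_contra hne
              exact Finset.disjoint_left.mp (hdisj z3 hz3 z hz hne)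
                (Finset.mem_insert_of_mem hw) (Finset.mem_insert_of_mem hv)
            rw [this] at he'F
            exact he'F
        · exact absurd (pathOn_mem hP he'P hve') hvnC
      obtain ⟨z', hz', hv' | hv'⟩ := hvu
      · obtain ⟨w, hw⟩ := Finset.card_pos.mp (by rw [(hL' z' hz').2]; exact hd)
        refine key s(z', w) ?_ (by simp [hv'])
        rw [hFeq]
        exact Finset.mem_biUnion.mpr ⟨z', hz', Finset.mem_image_of_mem _ hw⟩
      · refine key s(z', v) ?_ (by simp)
        rw [hFeq]
        exact Finset.mem_biUnion.mpr ⟨z', hz', Finset.mem_image_of_mem _ hv'⟩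
    have hcard : F.card = F0.card := by
      rw [starFactorOn_card ⟨hC', hL', hdisj', hcov', hFeq⟩,
          starFactorOn_card ⟨hC, hL, hdisj, hcov, hF0eq⟩]
    exact (Finset.eq_of_subset_of_card_le hsub hcard.le).symm
end
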